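/- arXiv:1103.5916 — 4 statements merged into one kernel-verified Lean document; each statement's English description precedes it below -/
import Mathlib

section
/- Let N be a net, σ and ρ firing sequences of N, and suppose there exists a finite GR-process P of N with P ∈ Π(σ) ∩ Π(ρ), i.e. σ ∈ Lin(P) and ρ ∈ Lin(P). Then σ ↔* ρ. -/
open scoped Classical

noncomputable section

/-- A place/transition net: `pre t s` and `post t s` are the arc weights
`F(s,t)` and `F(t,s)` of the flow relation, and `M0` is the initial marking.
Every transition has a finite non-empty set of preplaces and a finite set of
postplaces. -/
structure Net (S : Type*) (T : Type*) where
  pre : T → S → ℕ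
  post : T → S → ℕ
  M0 : S → ℕ
  pre_fin : ∀ t, {s | pre t s ≠ 0}.Finite
  pre_ne : ∀ t, ∃ s, pre t s ≠ 0
  post_fin : ∀ t, {s | post t s ≠ 0}.Finite

namespace Net

variable {S T : Type*}

/-- `•G`: the multiset of preplaces of a finite multiset `G` of transitions,
as a function `S → ℕ`. -/
def preM (N : Net S T) (G : Multiset T) (s : S) : ℕ :=
  (G.map fun t => N.pre t s).sum

/-- `G•`: the multiset of postplaces of a finite multiset `G` of transitions. -/
def postM (N : Net S T) (G : Multiset T) (s : S) : ℕ :=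
  (G.map fun t => N.post t s).sum

/-- The (non-empty, finite) multiset `G` of transitions is enabled in marking `M`. -/
def Enabled (N : Net S T) (M : S → ℕ) (G : Multiset T) : Prop :=
  G ≠ 0 ∧ ∀ s, N.preM G s ≤ M s

/-- `G` is a step from `M` to `M'`. -/
def Step (N : Net S T) (M : S → ℕ) (G : Multiset T) (M' : S → ℕ) : Prop :=
  N.Enabled M G ∧ ∀ s, M' s = M s - N.preM G s + N.postM G s

/-- `M →σ M'`: sequential firing of the word `σ` of transitions. -/
def FireSeq (N : Net S T) : (S → ℕ) → List T → (S → ℕ) → Prop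
  | M, [], M' => M' = M
  | M, t :: σ, M' => ∃ M₁, N.Step M {t} M₁ ∧ N.FireSeq M₁ σ M'

/-- `σ` is a firing sequence of `N`. -/
def FS (N : Net S T) (σ : List T) : Prop := ∃ M', N.FireSeq N.M0 σ M'

/-- `M` is reachable from the initial marking. -/
def Reachable (N : Net S T) (M : S → ℕ) : Prop := ∃ σ, N.FireSeq N.M0 σ M

/-- Two firing sequences are adjacent iff they differ only in the exchange of
two neighbouring transitions that could have been fired in one step. -/
def Adjacent (N : Net S T) (σ ρ : List T) : Prop :=
  N.FS σ ∧ N.FS ρ ∧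
    ∃ (σ₁ : List T) (t u : T) (σ₂ : List T) (M : S → ℕ),
      σ = σ₁ ++ t :: u :: σ₂ ∧ ρ = σ₁ ++ u :: t :: σ₂ ∧
      N.FireSeq N.M0 σ₁ M ∧ N.Enabled M (t ::ₘ {u})

/-- `↔*`: the reflexive transitive closure of adjacency. -/
def AdjEquiv (N : Net S T) : List T → List T → Prop :=
  Relation.ReflTransGen N.Adjacent

/-- A structural conflict net: transitions that can occur together in a step
never share a preplace. -/
def StructuralConflictNet (N : Net S T) : Prop :=
  ∀ t u : T, (∃ M, N.Reachable M ∧ N.Enabled M (t ::ₘ {u})) →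
    ∀ s, N.pre t s = 0 ∨ N.pre u s = 0

/-- The finite non-empty multiset `G` of transitions is in (semantic) conflict
in the marking `M`: every `G↾{t}` is enabled but `G` itself is not. -/
def InConflict (N : Net S T) (M : S → ℕ) (G : Multiset T) : Prop :=
  G ≠ 0 ∧ (∀ t ∈ G, N.Enabled M (Multiset.replicate (G.count t) t)) ∧
    ¬ N.Enabled M G

/-- `N` is (semantic) conflict-free. -/
def ConflictFree (N : Net S T) : Prop :=
  ∀ M, N.Reachable M → ∀ G : Multiset T, ¬ N.InConflict M G

end Net

/-- The type of firing sequences of `N`. -/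
def FSeq {S T : Type*} (N : Net S T) := {σ : List T // N.FS σ}

/-- Partial FS-runs: `↔*`-equivalence classes of firing sequences. -/
def PartialFSRun {S T : Type*} (N : Net S T) :=
  Quot (fun σ ρ : FSeq N => N.AdjEquiv σ.1 ρ.1)

/-- `[σ]`, the `↔*`-equivalence class of a firing sequence. -/
def fsClass {S T : Type*} (N : Net S T) (σ : FSeq N) : PartialFSRun N :=
  Quot.mk _ σ

/-- The prefix order on partial FS-runs: `[σ] ≤ [ρ]` iff
`∃ μ, σ ≤ μ ↔* ρ`. -/
def fsRunLE {S T : Type*} (N : Net S T) (x y : PartialFSRun N) : Prop :=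
  ∃ σ ρ : FSeq N, fsClass N σ = x ∧ fsClass N ρ = y ∧
    ∃ μ : List T, σ.1 <+: μ ∧ N.AdjEquiv μ ρ.1

/-- An FS-run: a prefix-closed and directed set of partial FS-runs. -/
def IsFSRun {S T : Type*} (N : Net S T) (R : Set (PartialFSRun N)) : Prop :=
  (∀ x y, fsRunLE N x y → y ∈ R → x ∈ R) ∧
  (∀ x ∈ R, ∀ y ∈ R, ∃ z ∈ R, fsRunLE N x z ∧ fsRunLE N y z)

/-- An FS-run `R` is conflict-free iff whenever, for every `t` in a finite
non-empty multiset `G`, the class of `σ t^{G(t)}` belongs to `R` and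
`M₀ →σ →(G↾{t})`, then `M₀ →σ →G`. -/
def ConflictFreeFSRun {S T : Type*} (N : Net S T)
    (R : Set (PartialFSRun N)) : Prop :=
  ∀ (G : Multiset T) (σ : List T), G ≠ 0 →
    (∀ t ∈ G,
      (∃ h : N.FS (σ ++ List.replicate (G.count t) t),
        fsClass N ⟨σ ++ List.replicate (G.count t) t, h⟩ ∈ R) ∧
      ∃ M, N.FireSeq N.M0 σ M ∧
        N.Enabled M (Multiset.replicate (G.count t) t)) →
    ∃ M, N.FireSeq N.M0 σ M ∧ N.Enabled M G

/-- The raw data of a candidate (GR-)process of a net with places `S` and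
transitions `T`: an occurrence net whose places are drawn from `α` and whose
transitions are drawn from `β`, together with the projections to `S` and `T`. -/
structure RawProc (S T α β : Type*) where
  places : Set α
  transitions : Set β
  flowPT : α → β → ℕ
  flowTP : β → α → ℕ
  initMark : α → ℕ
  projS : α → S
  projT : β → T

namespace RawProc

variable {S T α β : Type*}

/-- The flow relation of the occurrence net, as a relation on `α ⊕ β`. -/
def flowRel (P : RawProc S T α β) : (α ⊕ β) → (α ⊕ β) → Prop := fun x y =>
  match x, y with
  | Sum.inl p, Sum.inr t => P.flowPT p t ≠ 0
  | Sum.inr t, Sum.inl p => P.flowTP t p ≠ 0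
  | _, _ => False

/-- `F⁺`, the transitive closure of the flow relation. -/
def causal (P : RawProc S T α β) : (α ⊕ β) → (α ⊕ β) → Prop :=
  Relation.TransGen P.flowRel

/-- `P` is finite iff its set of transitions is finite. -/
def FiniteProc (P : RawProc S T α β) : Prop := P.transitions.Finite

/-- `Q` is a prefix of `P` (written `Q ≤ P`): the places and transitions of `Q`
are included in those of `P`, the initial markings coincide, and flow relation
and projection of `Q` are the restrictions of those of `P`. -/
def IsPrefix (Q P : RawProc S T α β) : Prop :=
  Q.places ⊆ P.places ∧ Q.transitions ⊆ P.transitions ∧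
  Q.initMark = P.initMark ∧
  (∀ p ∈ Q.places, ∀ t ∈ Q.transitions,
    Q.flowPT p t = P.flowPT p t ∧ Q.flowTP t p = P.flowTP t p) ∧
  (∀ p ∈ Q.places, Q.projS p = P.projS p) ∧
  (∀ t ∈ Q.transitions, Q.projT t = P.projT t)

/-- Isomorphism of processes of the same net: a bijection between places and
between transitions preserving flow, initial marking and the projections. -/
def Iso (P Q : RawProc S T α β) : Prop :=
  ∃ (fS : α → α) (fT : β → β),
    Set.BijOn fS P.places Q.places ∧ Set.BijOn fT P.transitions Q.transitions ∧
    (∀ p ∈ P.places, ∀ t ∈ P.transitions,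
      Q.flowPT (fS p) (fT t) = P.flowPT p t ∧
      Q.flowTP (fT t) (fS p) = P.flowTP t p) ∧
    (∀ p ∈ P.places, Q.initMark (fS p) = P.initMark p) ∧
    (∀ p ∈ P.places, Q.projS (fS p) = P.projS p) ∧
    (∀ t ∈ P.transitions, Q.projT (fT t) = P.projT t)

/-- `swap(P,p,q)`: exchange the outgoing arcs of the places `p` and `q`. -/
def swap (P : RawProc S T α β) (p q : α) : RawProc S T α β :=
  { P with flowPT := fun x t =>
      if x = p then P.flowPT q t
      else if x = q then P.flowPT p t
      else P.flowPT x t }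

/-- One step swapping equivalence `P ≈s Q`: `swap(P,p,q)` is isomorphic to `Q`
for some causally unrelated places `p`, `q` with the same image in the net. -/
def SwapStep (P Q : RawProc S T α β) : Prop :=
  ∃ p q : α, p ∈ P.places ∧ q ∈ P.places ∧ P.projS p = P.projS q ∧
    ¬ P.causal (Sum.inl p) (Sum.inl q) ∧ ¬ P.causal (Sum.inl q) (Sum.inl p) ∧
    Iso (P.swap p q) Q

/-- `≈s*`: the reflexive transitive closure of one step swapping equivalence. -/
def SwapEquiv : RawProc S T α β → RawProc S T α β → Prop :=
  Relation.ReflTransGen SwapStep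

/-- `Lin(P)`: the linearisations of a finite process `P`, i.e. the images under
the projection of the enumerations of its transitions compatible with `F*`. -/
def Lin (P : RawProc S T α β) : Set (List T) :=
  { σ | ∃ ts : List β, ts.Nodup ∧ (∀ t : β, t ∈ ts ↔ t ∈ P.transitions) ∧
      (∀ (i j : ℕ) (hi : i < ts.length) (hj : j < ts.length),
        Relation.ReflTransGen P.flowRel
          (Sum.inr (ts.get ⟨i, hi⟩)) (Sum.inr (ts.get ⟨j, hj⟩)) → i ≤ j) ∧
      σ = ts.map P.projT }

end RawProc

/-- `P` is a (GR-)process of the net `N`: its underlying net is an occurrence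
net (unbranched places, acyclic flow, finite causal pasts, transitions with
finite non-empty presets and finite postsets), the flow, initial marking and
projections are normalised to vanish outside the places/transitions, and the
projection maps the process onto `N` respecting initial marking and arc
weights (counted via the preimages of the projection). -/
structure IsProcessOf {S T α β : Type*} (N : Net S T)
    (P : RawProc S T α β) : Prop where
  flowPT_dom : ∀ p t, P.flowPT p t ≠ 0 → p ∈ P.places ∧ t ∈ P.transitions
  flowTP_dom : ∀ t p, P.flowTP t p ≠ 0 → p ∈ P.places ∧ t ∈ P.transitions
  initMark_dom : ∀ p, p ∉ P.places → P.initMark p = 0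
  pre_place : ∀ p ∈ P.places,
    {t | P.flowTP t p ≠ 0}.Subsingleton ∧ ∀ t, P.flowTP t p ≤ 1
  post_place : ∀ p ∈ P.places,
    {t | P.flowPT p t ≠ 0}.Subsingleton ∧ ∀ t, P.flowPT p t ≤ 1
  init_one : ∀ p ∈ P.places, (∀ t, P.flowTP t p = 0) → P.initMark p = 1
  init_zero : ∀ p ∈ P.places, (∃ t, P.flowTP t p ≠ 0) → P.initMark p = 0
  acyclic : ∀ x, ¬ P.causal x x
  finite_past : ∀ t ∈ P.transitions,
    {u : β | P.causal (Sum.inr u) (Sum.inr t)}.Finite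
  t_pre_fin : ∀ t ∈ P.transitions, {p | P.flowPT p t ≠ 0}.Finite
  t_pre_ne : ∀ t ∈ P.transitions, ∃ p, P.flowPT p t ≠ 0
  t_post_fin : ∀ t ∈ P.transitions, {p | P.flowTP t p ≠ 0}.Finite
  proj_init_fin : ∀ s : S, {p | P.projS p = s ∧ P.initMark p ≠ 0}.Finite
  proj_init : ∀ s : S, (∑ᶠ p ∈ {p | P.projS p = s}, P.initMark p) = N.M0 s
  proj_pre : ∀ t ∈ P.transitions, ∀ s : S,
    (∑ᶠ p ∈ {p | P.projS p = s}, P.flowPT p t) = N.pre (P.projT t) s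
  proj_post : ∀ t ∈ P.transitions, ∀ s : S,
    (∑ᶠ p ∈ {p | P.projS p = s}, P.flowTP t p) = N.post (P.projT t) s

/-- The type of finite GR-processes of `N` with places in `α` and transitions
in `β`. -/
def FinProcOf {S T : Type*} (N : Net S T) (α β : Type*) :=
  {P : RawProc S T α β // IsProcessOf N P ∧ P.FiniteProc}

/-- Partial BD-runs: `≈s*`-equivalence classes of finite GR-processes. -/
def PartialBDRun {S T : Type*} (N : Net S T) (α β : Type*) :=
  Quot (fun P Q : FinProcOf N α β => RawProc.SwapEquiv P.1 Q.1)

/-- `⟦P⟧`, the `≈s*`-equivalence class of a finite process. -/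
def bdClass {S T α β : Type*} (N : Net S T) (P : FinProcOf N α β) :
    PartialBDRun N α β :=
  Quot.mk _ P

/-- The lifted prefix relation on `≈s*`-equivalence classes:
`⟦P⟧ ≤ ⟦Q⟧` iff `P ≈s* P' ≤ Q' ≈s* Q` for some `P'`, `Q'`. -/
def bdRunLE {S T α β : Type*} (N : Net S T)
    (x y : PartialBDRun N α β) : Prop :=
  ∃ P Q : FinProcOf N α β, bdClass N P = x ∧ bdClass N Q = y ∧
    ∃ P' Q' : RawProc S T α β,
      RawProc.SwapEquiv P.1 P' ∧ RawProc.IsPrefix P' Q' ∧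
      RawProc.SwapEquiv Q' Q.1

/-- A BD-run: a prefix-closed and directed set of partial BD-runs. -/
def IsBDRun {S T α β : Type*} (N : Net S T)
    (R : Set (PartialBDRun N α β)) : Prop :=
  (∀ x y, bdRunLE N x y → y ∈ R → x ∈ R) ∧
  (∀ x ∈ R, ∀ y ∈ R, ∃ z ∈ R, bdRunLE N x z ∧ bdRunLE N y z)

/-- `⌊P⌋ = ↓{⟦P'⟧ | P' ≤ P, P' finite}`: the prefix-closure of the set of
classes of finite prefixes of the process `P`. -/
def BDify {S T α β : Type*} (N : Net S T) (P : RawProc S T α β) :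
    Set (PartialBDRun N α β) :=
  { x | ∃ Q : FinProcOf N α β, RawProc.IsPrefix Q.1 P ∧ bdRunLE N x (bdClass N Q) }

/-- Swapping equivalence `P ≈s∞ Q` of (possibly infinite) processes:
`↓{⟦P'⟧ | P' ≤ P, P' finite} = ↓{⟦Q'⟧ | Q' ≤ Q, Q' finite}`. -/
def SwapEquivInf {S T α β : Type*} (N : Net S T)
    (P Q : RawProc S T α β) : Prop :=
  BDify N P = BDify N Q

/-- A canonical carrier type, large enough to host every GR-process of a net
with places `S` and transitions `T`. -/
abbrev BigCarrier (S T : Type*) := Set ((S ⊕ T) × ℕ)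

end
section BDproof

open Relation

variable {S T α β : Type*}

/-- `a` is not caused (weakly) by `b`. -/
def Rle (P : RawProc S T α β) (a b : β) : Prop :=
  ¬ Relation.ReflTransGen P.flowRel (Sum.inr b) (Sum.inr a)

/-- A good list: a nodup enumeration of the transitions respecting causality. -/
def Good (P : RawProc S T α β) (ls : List β) : Prop :=
  ls.Nodup ∧ (∀ t, t ∈ ls ↔ t ∈ P.transitions) ∧ ls.Pairwise (Rle P)

/-- Swapping two adjacent causally independent transitions, both sides good. -/
def GS (P : RawProc S T α β) (x y : List β) : Prop :=
  ∃ a t u b, x = a ++ t :: u :: b ∧ y = a ++ u :: t :: b ∧ Good P x ∧ Good P y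

/-- The residual token count at process-place `p` after firing the
transitions in `ls`. -/
def markl (P : RawProc S T α β) (ls : List β) (p : α) : ℕ :=
  P.initMark p + (ls.map fun v => P.flowTP v p).sum - (ls.map fun v => P.flowPT p v).sum

/-- The marking of the underlying net after firing the transitions in `ls`. -/
noncomputable def Mk (P : RawProc S T α β) (ls : List β) : S → ℕ :=
  fun s => ∑ᶠ p ∈ {p | P.projS p = s}, markl P ls p

/-- Predecessor-closedness of a list of process transitions. -/
def ClosedL (P : RawProc S T α β) (pre : List β) : Prop :=
  ∀ v ∈ pre, ∀ w ∈ P.transitions, w ≠ v →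
    Relation.ReflTransGen P.flowRel (Sum.inr w) (Sum.inr v) → w ∈ pre

/-- All causal predecessors of `t` occur in `pre`. -/
def Ready (P : RawProc S T α β) (pre : List β) (t : β) : Prop :=
  ∀ w ∈ P.transitions, w ≠ t →
    Relation.ReflTransGen P.flowRel (Sum.inr w) (Sum.inr t) → w ∈ pre

lemma flowRel_TP {P : RawProc S T α β} {w : β} {p : α} (h : P.flowTP w p ≠ 0) :
    P.flowRel (Sum.inr w) (Sum.inl p) := h

lemma flowRel_PT {P : RawProc S T α β} {p : α} {t : β} (h : P.flowPT p t ≠ 0) :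
    P.flowRel (Sum.inl p) (Sum.inr t) := h

lemma map_sum_le_one {l : List β} (hl : l.Nodup) {f : β → ℕ}
    (hs : {x | f x ≠ 0}.Subsingleton) (hb : ∀ x, f x ≤ 1) :
    (l.map f).sum ≤ 1 := by
  induction l with
  | nil => simp
  | cons x l ih =>
    simp only [List.map_cons, List.sum_cons]
    rcases Nat.eq_zero_or_pos (f x) with h0 | hpos
    · simpa [h0] using ih (List.Nodup.of_cons hl)
    · have hrest : (l.map f).sum = 0 := by
        apply List.sum_eq_zero
        intro n hn
        obtain ⟨y, hy, rfl⟩ := List.mem_map.mp hn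
        by_contra hne
        have : y = x := hs hne hpos.ne'
        exact (List.nodup_cons.mp hl).1 (this ▸ hy)
      have := hb x
      omega

lemma finsum_eq_sum_of {A : Set α} {f : α → ℕ} (hf : (A ∩ Function.support f).Finite)
    {F : Finset α} (hcov : A ∩ Function.support f ⊆ ↑F) (hsub : ↑F ⊆ A) :
    (∑ᶠ p ∈ A, f p) = ∑ p ∈ F, f p := by
  rw [finsum_mem_eq_sum f hf]
  apply Finset.sum_subset
  · intro x hx
    exact hcov (hf.mem_toFinset.mp hx)
  · intro x hxF hxn
    by_contra h0
    exact hxn (hf.mem_toFinset.mpr ⟨hsub hxF, h0⟩)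

lemma finsum_helper_le {A : Set α} {f g : α → ℕ}
    (hf : (A ∩ Function.support f).Finite) (hg : (A ∩ Function.support g).Finite)
    (h : ∀ p ∈ A, f p ≤ g p) :
    (∑ᶠ p ∈ A, f p) ≤ ∑ᶠ p ∈ A, g p := by
  have hfg := hf.union hg
  have hfg' : A ∩ Function.support f ∪ A ∩ Function.support g ⊆ ↑hfg.toFinset := by
    simp [Set.Finite.coe_toFinset]
  have hsub : ↑hfg.toFinset ⊆ A := by
    rw [Set.Finite.coe_toFinset]
    exact Set.union_subset Set.inter_subset_left Set.inter_subset_left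
  rw [finsum_eq_sum_of hf (fun x hx => hfg' (Or.inl hx)) hsub,
    finsum_eq_sum_of hg (fun x hx => hfg' (Or.inr hx)) hsub]
  exact Finset.sum_le_sum fun p hp => h p (hsub hp)

lemma finsum_helper_eq {A : Set α} {f g f' g' : α → ℕ}
    (hf : (A ∩ Function.support f).Finite) (hg : (A ∩ Function.support g).Finite)
    (hf' : (A ∩ Function.support f').Finite) (hg' : (A ∩ Function.support g').Finite)
    (h : ∀ p ∈ A, f p + g p = f' p + g' p) :
    ((∑ᶠ p ∈ A, f p) + ∑ᶠ p ∈ A, g p) = (∑ᶠ p ∈ A, f' p) + ∑ᶠ p ∈ A, g' p := by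
  have hfin := (hf.union hg).union (hf'.union hg')
  have hsub : ↑hfin.toFinset ⊆ A := by
    rw [Set.Finite.coe_toFinset]
    refine Set.union_subset (Set.union_subset Set.inter_subset_left Set.inter_subset_left)
      (Set.union_subset Set.inter_subset_left Set.inter_subset_left)
  have hc : ∀ {h : α → ℕ}, A ∩ Function.support h ⊆
      (A ∩ Function.support f ∪ A ∩ Function.support g) ∪
        (A ∩ Function.support f' ∪ A ∩ Function.support g') →
      A ∩ Function.support h ⊆ ↑hfin.toFinset := by
    intro h hh
    rw [Set.Finite.coe_toFinset]; exact hh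
  rw [finsum_eq_sum_of hf (hc (fun x hx => Or.inl (Or.inl hx))) hsub,
    finsum_eq_sum_of hg (hc (fun x hx => Or.inl (Or.inr hx))) hsub,
    finsum_eq_sum_of hf' (hc (fun x hx => Or.inr (Or.inl hx))) hsub,
    finsum_eq_sum_of hg' (hc (fun x hx => Or.inr (Or.inr hx))) hsub,
    ← Finset.sum_add_distrib, ← Finset.sum_add_distrib]
  exact Finset.sum_congr rfl fun p hp => h p (hsub hp)

section Sem

variable {N : Net S T} {P : RawProc S T α β}

lemma init_add_prod_pos (hP : IsProcessOf N P) {pre : List β} {p : α}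
    (hp : p ∈ P.places) (hw : ∀ w, P.flowTP w p ≠ 0 → w ∈ pre) :
    1 ≤ P.initMark p + (pre.map fun v => P.flowTP v p).sum := by
  by_cases hz : ∀ w, P.flowTP w p = 0
  · rw [hP.init_one p hp hz]; omega
  · push_neg at hz
    obtain ⟨w, hw0⟩ := hz
    have hm : P.flowTP w p ∈ pre.map fun v => P.flowTP v p :=
      List.mem_map_of_mem (hw w hw0)
    have := List.le_sum_of_mem hm
    omega

lemma cons_le_init_add_prod (hP : IsProcessOf N P) {pre : List β}
    (hnd : pre.Nodup) (hC : ClosedL P pre) (p : α) :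
    (pre.map fun v => P.flowPT p v).sum ≤
      P.initMark p + (pre.map fun v => P.flowTP v p).sum := by
  by_cases hp : p ∈ P.places
  · have hps := hP.post_place p hp
    have h1 : (pre.map fun v => P.flowPT p v).sum ≤ 1 :=
      map_sum_le_one hnd hps.1 hps.2
    rcases Nat.eq_zero_or_pos (pre.map fun v => P.flowPT p v).sum with h0 | hpos
    · omega
    · have : ∃ v ∈ pre, P.flowPT p v ≠ 0 := by
        by_contra hcon
        push_neg at hcon
        have : (pre.map fun v => P.flowPT p v).sum = 0 :=
          List.sum_eq_zero fun n hn => by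
            obtain ⟨y, hy, rfl⟩ := List.mem_map.mp hn
            exact hcon y hy
        omega
      obtain ⟨v, hv, hv0⟩ := this
      have key : 1 ≤ P.initMark p + (pre.map fun w => P.flowTP w p).sum := by
        apply init_add_prod_pos hP hp
        intro w hw0
        have hwt : w ∈ P.transitions := (hP.flowTP_dom w p hw0).2
        have hwv : Relation.ReflTransGen P.flowRel (Sum.inr w) (Sum.inr v) :=
          Relation.ReflTransGen.head (flowRel_TP hw0)
            (Relation.ReflTransGen.single (flowRel_PT hv0))
        have hne : w ≠ v := by
          rintro rfl
          exact hP.acyclic (Sum.inr w)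
            (Relation.TransGen.head (flowRel_TP hw0) (Relation.TransGen.single (flowRel_PT hv0)))
        exact hC v hv w hwt hne hwv
      omega
  · have : (pre.map fun v => P.flowPT p v).sum = 0 :=
      List.sum_eq_zero fun n hn => by
        obtain ⟨y, hy, rfl⟩ := List.mem_map.mp hn
        by_contra h0
        exact hp (hP.flowPT_dom p y h0).1
    omega

lemma flow_le_markl (hP : IsProcessOf N P) {pre : List β}
    (hnd : pre.Nodup) (hC : ClosedL P pre) {t : β}
    (ht : t ∈ P.transitions) (htn : t ∉ pre) (hpred : Ready P pre t)
    (p : α) : P.flowPT p t ≤ markl P pre p := by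
  by_cases h0 : P.flowPT p t = 0
  · simp [h0]
  have hp : p ∈ P.places := (hP.flowPT_dom p t h0).1
  have hle1 : P.flowPT p t ≤ 1 := (hP.post_place p hp).2 t
  have hcons : (pre.map fun v => P.flowPT p v).sum = 0 := by
    apply List.sum_eq_zero
    intro n hn
    obtain ⟨y, hy, rfl⟩ := List.mem_map.mp hn
    by_contra hy0
    have : y = t := (hP.post_place p hp).1 hy0 h0
    exact htn (this ▸ hy)
  have hprod : 1 ≤ P.initMark p + (pre.map fun v => P.flowTP v p).sum := by
    apply init_add_prod_pos hP hp
    intro w hw0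
    have hwt : w ∈ P.transitions := (hP.flowTP_dom w p hw0).2
    have hwv : Relation.ReflTransGen P.flowRel (Sum.inr w) (Sum.inr t) :=
      Relation.ReflTransGen.head (flowRel_TP hw0)
        (Relation.ReflTransGen.single (flowRel_PT h0))
    have hne : w ≠ t := by
      rintro rfl
      exact hP.acyclic (Sum.inr w)
        (Relation.TransGen.head (flowRel_TP hw0) (Relation.TransGen.single (flowRel_PT h0)))
    exact hpred w hwt hne hwv
  unfold markl
  omega

lemma markl_append (hP : IsProcessOf N P) {pre : List β}
    (hnd : pre.Nodup) (hC : ClosedL P pre) {t : β}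
    (ht : t ∈ P.transitions) (htn : t ∉ pre) (hpred : Ready P pre t)
    (p : α) :
    markl P (pre ++ [t]) p + P.flowPT p t = markl P pre p + P.flowTP t p := by
  have h1 := cons_le_init_add_prod hP hnd hC p
  have h2 := flow_le_markl hP hnd hC ht htn hpred p
  unfold markl at *
  simp only [List.map_append, List.sum_append, List.map_cons, List.map_nil,
    List.sum_cons, List.sum_nil]
  omega

lemma markl_support_fin (hP : IsProcessOf N P) {pre : List β}
    (hsub : ∀ v ∈ pre, v ∈ P.transitions) (s : S) :
    ({p | P.projS p = s} ∩ Function.support (markl P pre)).Finite := by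
  apply Set.Finite.subset (s := {p | P.projS p = s ∧ P.initMark p ≠ 0} ∪
    ⋃ v ∈ {v | v ∈ pre}, {p | P.flowTP v p ≠ 0})
  · exact (hP.proj_init_fin s).union
      (Set.Finite.biUnion pre.finite_toSet fun v hv => hP.t_post_fin v (hsub v hv))
  · rintro p ⟨hps, hm⟩
    have hm' : markl P pre p ≠ 0 := hm
    have : P.initMark p ≠ 0 ∨ (pre.map fun v => P.flowTP v p).sum ≠ 0 := by
      unfold markl at hm'; omega
    rcases this with h | h
    · exact Or.inl ⟨hps, h⟩
    · right
      have : ∃ v ∈ pre, P.flowTP v p ≠ 0 := by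
        by_contra hcon
        push_neg at hcon
        exact h (List.sum_eq_zero fun n hn => by
          obtain ⟨y, hy, rfl⟩ := List.mem_map.mp hn
          exact hcon y hy)
      obtain ⟨v, hv, hv0⟩ := this
      exact Set.mem_biUnion hv hv0

lemma flowPT_support_fin (hP : IsProcessOf N P) {t : β} (ht : t ∈ P.transitions) (s : S) :
    ({p | P.projS p = s} ∩ Function.support (fun p => P.flowPT p t)).Finite :=
  (hP.t_pre_fin t ht).subset fun p hp => hp.2

lemma flowTP_support_fin (hP : IsProcessOf N P) {t : β} (ht : t ∈ P.transitions) (s : S) :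
    ({p | P.projS p = s} ∩ Function.support (fun p => P.flowTP t p)).Finite :=
  (hP.t_post_fin t ht).subset fun p hp => hp.2

lemma Mk_nil (hP : IsProcessOf N P) : Mk P ([] : List β) = N.M0 := by
  funext s
  unfold Mk
  have : markl P ([] : List β) = P.initMark := by
    funext p; simp [markl]
  rw [this]
  exact hP.proj_init s

lemma preM_singleton (N : Net S T) (x : T) (s : S) : N.preM {x} s = N.pre x s := by
  simp [Net.preM]

lemma postM_singleton (N : Net S T) (x : T) (s : S) : N.postM {x} s = N.post x s := by
  simp [Net.postM]

lemma Mk_enabled (hP : IsProcessOf N P) {pre : List β}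
    (hnd : pre.Nodup) (hsub : ∀ v ∈ pre, v ∈ P.transitions) (hC : ClosedL P pre)
    {t : β} (ht : t ∈ P.transitions) (htn : t ∉ pre) (hpred : Ready P pre t) (s : S) :
    N.pre (P.projT t) s ≤ Mk P pre s := by
  rw [← hP.proj_pre t ht s]
  exact finsum_helper_le (flowPT_support_fin hP ht s) (markl_support_fin hP hsub s)
    fun p _ => flow_le_markl hP hnd hC ht htn hpred p

lemma Mk_step (hP : IsProcessOf N P) {pre : List β}
    (hnd : pre.Nodup) (hsub : ∀ v ∈ pre, v ∈ P.transitions) (hC : ClosedL P pre)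
    {t : β} (ht : t ∈ P.transitions) (htn : t ∉ pre) (hpred : Ready P pre t) :
    N.Step (Mk P pre) {P.projT t} (Mk P (pre ++ [t])) := by
  have hsub' : ∀ v ∈ pre ++ [t], v ∈ P.transitions := by
    intro v hv
    rcases List.mem_append.mp hv with h | h
    · exact hsub v h
    · simpa using (List.mem_singleton.mp h) ▸ ht
  refine ⟨⟨by simp, fun s => ?_⟩, fun s => ?_⟩
  · rw [preM_singleton]
    exact Mk_enabled hP hnd hsub hC ht htn hpred s
  · rw [preM_singleton, postM_singleton]
    have key : Mk P (pre ++ [t]) s + (∑ᶠ p ∈ {p | P.projS p = s}, P.flowPT p t) =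
        Mk P pre s + ∑ᶠ p ∈ {p | P.projS p = s}, P.flowTP t p :=
      finsum_helper_eq (markl_support_fin hP hsub' s) (flowPT_support_fin hP ht s)
        (markl_support_fin hP hsub s) (flowTP_support_fin hP ht s)
        fun p _ => markl_append hP hnd hC ht htn hpred p
    have hle : (∑ᶠ p ∈ {p | P.projS p = s}, P.flowPT p t) ≤ Mk P pre s :=
      finsum_helper_le (flowPT_support_fin hP ht s) (markl_support_fin hP hsub s)
        fun p _ => flow_le_markl hP hnd hC ht htn hpred p
    rw [← hP.proj_pre t ht s, ← hP.proj_post t ht s] at *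
    omega

lemma Mk_enabled2 (hP : IsProcessOf N P) {pre : List β}
    (hnd : pre.Nodup) (hsub : ∀ v ∈ pre, v ∈ P.transitions) (hC : ClosedL P pre)
    {t u : β} (ht : t ∈ P.transitions) (hu : u ∈ P.transitions)
    (htn : t ∉ pre) (hun : u ∉ pre) (hne : t ≠ u)
    (hpt : Ready P pre t) (hpu : Ready P pre u) :
    N.Enabled (Mk P pre) (P.projT t ::ₘ {P.projT u}) := by
  refine ⟨by simp, fun s => ?_⟩
  have hpm : N.preM (P.projT t ::ₘ {P.projT u}) s = N.pre (P.projT t) s + N.pre (P.projT u) s := by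
    simp [Net.preM]
  rw [hpm, ← hP.proj_pre t ht s, ← hP.proj_pre u hu s]
  have hflt := flowPT_support_fin hP ht s
  have hflu := flowPT_support_fin hP hu s
  have hzero : ({p | P.projS p = s} ∩ Function.support (fun _ : α => (0:ℕ))).Finite := by
    simp
  have hplus : ({p | P.projS p = s} ∩
      Function.support (fun p => P.flowPT p t + P.flowPT p u)).Finite := by
    apply Set.Finite.subset (hflt.union hflu)
    rintro p ⟨hps, hm⟩
    have : P.flowPT p t ≠ 0 ∨ P.flowPT p u ≠ 0 := by
      by_contra hcon; push_neg at hcon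
      exact hm (by simp [Function.mem_support] at hm ⊢; omega)
    rcases this with h | h
    · exact Or.inl ⟨hps, h⟩
    · exact Or.inr ⟨hps, h⟩
  have hsum : ((∑ᶠ p ∈ {p | P.projS p = s}, P.flowPT p t) +
      ∑ᶠ p ∈ {p | P.projS p = s}, P.flowPT p u) =
      (∑ᶠ p ∈ {p | P.projS p = s}, (P.flowPT p t + P.flowPT p u)) +
      ∑ᶠ p ∈ {p | P.projS p = s}, (fun _ : α => (0:ℕ)) p := by
    exact finsum_helper_eq hflt hflu hplus hzero fun p _ => by simp
  have hz : (∑ᶠ p ∈ {p | P.projS p = s}, (fun _ : α => (0:ℕ)) p) = 0 := by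
    simp
  rw [hsum, hz, add_zero]
  apply finsum_helper_le hplus (markl_support_fin hP hsub s)
  intro p _
  by_cases h0t : P.flowPT p t = 0
  · by_cases h0u : P.flowPT p u = 0
    · simp [h0t, h0u]
    · have := flow_le_markl hP hnd hC hu hun hpu p
      omega
  · have hpl : p ∈ P.places := (hP.flowPT_dom p t h0t).1
    have h0u : P.flowPT p u = 0 := by
      by_contra h0u
      exact hne ((hP.post_place p hpl).1 h0t h0u)
    have := flow_le_markl hP hnd hC ht htn hpt p
    omega

lemma fireSeq_append (N : Net S T) :
    ∀ (σ ρ : List T) (M M' : S → ℕ),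
      N.FireSeq M (σ ++ ρ) M' ↔ ∃ M₁, N.FireSeq M σ M₁ ∧ N.FireSeq M₁ ρ M' := by
  intro σ
  induction σ with
  | nil =>
    intro ρ M M'
    constructor
    · intro h; exact ⟨M, rfl, h⟩
    · rintro ⟨M₁, rfl, h⟩; exact h
  | cons t σ ih =>
    intro ρ M M'
    constructor
    · rintro ⟨M₁, hstep, hrest⟩
      obtain ⟨M₂, h1, h2⟩ := (ih ρ M₁ M').mp hrest
      exact ⟨M₂, ⟨M₁, hstep, h1⟩, h2⟩
    · rintro ⟨M₂, ⟨M₁, hstep, h1⟩, h2⟩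
      exact ⟨M₁, hstep, (ih ρ M₁ M').mpr ⟨M₂, h1, h2⟩⟩

/-- Extract all facts needed about a prefix `pre` of a good list. -/
lemma good_facts {ls pre : List β} {t : β} {rest : List β}
    (hG : Good P ls) (hls : ls = pre ++ t :: rest) :
    pre.Nodup ∧ (∀ v ∈ pre, v ∈ P.transitions) ∧ ClosedL P pre ∧
      t ∈ P.transitions ∧ t ∉ pre ∧ Ready P pre t := by
  obtain ⟨hnd, hmem, hpw⟩ := hG
  subst hls
  have hnd' := List.nodup_append.mp hnd
  obtain ⟨hpw1, hpw2, hpw3⟩ := List.pairwise_append.mp hpw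
  refine ⟨hnd'.1, fun v hv => (hmem v).mp (List.mem_append_left _ hv), ?_, ?_, ?_, ?_⟩
  · intro v hv w hwT hwv hR
    have hw : w ∈ pre ++ t :: rest := (hmem w).mpr hwT
    rcases List.mem_append.mp hw with h | h
    · exact h
    · exact absurd hR (hpw3 v hv w h)
  · exact (hmem t).mp (List.mem_append_right _ (List.mem_cons_self))
  · intro htp
    exact hnd'.2.2 t htp t List.mem_cons_self rfl
  · intro w hwT hwt hR
    have hw : w ∈ pre ++ t :: rest := (hmem w).mpr hwT
    rcases List.mem_append.mp hw with h | h
    · exact h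
    · rcases List.mem_cons.mp h with h' | h'
      · exact absurd h' hwt
      · exact absurd hR ((List.pairwise_cons.mp hpw2).1 w h')

lemma fireSeq_good (hP : IsProcessOf N P) {ls : List β} (hG : Good P ls) :
    ∀ pre, pre <+: ls → N.FireSeq N.M0 (pre.map P.projT) (Mk P pre) := by
  intro pre
  induction pre using List.reverseRecOn with
  | nil =>
    intro _
    show Mk P ([] : List β) = N.M0
    exact Mk_nil hP
  | append_singleton pre t ih =>
    intro hpf
    obtain ⟨rest, hrest⟩ := hpf
    have hls : ls = pre ++ t :: rest := by rw [← hrest]; simp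
    obtain ⟨hnd, hsub, hC, ht, htn, hpred⟩ := good_facts hG hls
    have h1 := ih ⟨t :: rest, hls.symm⟩
    rw [List.map_append]
    refine (fireSeq_append N _ _ _ _).mpr ⟨Mk P pre, h1, ?_⟩
    exact ⟨Mk P (pre ++ [t]), Mk_step hP hnd hsub hC ht htn hpred, rfl⟩

lemma fs_good (hP : IsProcessOf N P) {ls : List β} (hG : Good P ls) :
    N.FS (ls.map P.projT) :=
  ⟨Mk P ls, fireSeq_good hP hG ls (List.prefix_refl ls)⟩

lemma gs_adjacent (hP : IsProcessOf N P) {x y : List β} (h : GS P x y) :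
    N.Adjacent (x.map P.projT) (y.map P.projT) := by
  obtain ⟨a, t, u, b, hx, hy, hGx, hGy⟩ := h
  obtain ⟨hnd, hsub, hC, ht, htn, hpt⟩ := good_facts hGx hx
  have hx' : x = (a ++ [t]) ++ u :: b := by rw [hx]; simp
  obtain ⟨hnd', hsub', hC', hu, hun', hpu'⟩ := good_facts hGx hx'
  have hun : u ∉ a := fun hua => hun' (List.mem_append_left _ hua)
  have hne : t ≠ u := by
    intro hteq
    exact hun' (hteq ▸ List.mem_append_right _ (List.mem_singleton_self t))
  -- ¬ t ⟶* u, from goodness of y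
  have hnotTU : ¬ Relation.ReflTransGen P.flowRel (Sum.inr t) (Sum.inr u) := by
    obtain ⟨-, -, hpwy⟩ := hGy
    rw [hy] at hpwy
    obtain ⟨-, hpw2, -⟩ := List.pairwise_append.mp hpwy
    exact (List.pairwise_cons.mp hpw2).1 t (List.mem_cons_self)
  have hpu : Ready P a u := by
    intro w hwT hwu hR
    rcases List.mem_append.mp (hpu' w hwT hwu hR) with h' | h'
    · exact h'
    · exact absurd hR ((List.mem_singleton.mp h') ▸ hnotTU)
  refine ⟨fs_good hP hGx, fs_good hP hGy, a.map P.projT, P.projT t, P.projT u,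
    b.map P.projT, Mk P a, ?_, ?_, ?_, ?_⟩
  · rw [hx]; simp
  · rw [hy]; simp
  · exact fireSeq_good hP hGx a ⟨t :: u :: b, hx.symm⟩
  · exact Mk_enabled2 hP hnd hsub hC ht hu htn hun hne hpt hpu

end Sem

section Comb

variable {P : RawProc S T α β}

lemma good_swap {l r : List β} {t u : β}
    (h : Good P (l ++ t :: u :: r)) (hR : Rle P u t) :
    Good P (l ++ u :: t :: r) := by
  obtain ⟨hnd, hmem, hpw⟩ := h
  have hperm : (l ++ t :: u :: r).Perm (l ++ u :: t :: r) :=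
    List.Perm.append_left l (List.Perm.swap u t r)
  refine ⟨hperm.nodup hnd, fun x => (hperm.mem_iff.symm.trans (hmem x)), ?_⟩
  rw [List.pairwise_append] at hpw ⊢
  obtain ⟨h1, h2, h3⟩ := hpw
  rw [List.pairwise_cons] at h2
  obtain ⟨h2a, h2b⟩ := h2
  rw [List.pairwise_cons] at h2b
  obtain ⟨h2c, h2d⟩ := h2b
  refine ⟨h1, ?_, ?_⟩
  · rw [List.pairwise_cons]
    refine ⟨?_, ?_⟩
    · intro x hx
      rcases List.mem_cons.mp hx with rfl | hx'
      · exact hR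
      · exact h2c x hx'
    · rw [List.pairwise_cons]
      exact ⟨fun x hx => h2a x (List.mem_cons_of_mem _ hx), h2d⟩
  · intro x hx y hy
    apply h3 x hx
    rcases List.mem_cons.mp hy with rfl | hy'
    · exact List.mem_cons_of_mem _ (List.mem_cons_self)
    · rcases List.mem_cons.mp hy' with rfl | hy''
      · exact List.mem_cons_self
      · exact List.mem_cons_of_mem _ (List.mem_cons_of_mem _ hy'')

lemma bubble : ∀ (a c b : List β) (u : β), (∀ x ∈ a, Rle P u x) →
    Good P (c ++ (a ++ u :: b)) →
    Relation.ReflTransGen (GS P) (c ++ (a ++ u :: b)) (c ++ u :: (a ++ b)) ∧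
      Good P (c ++ u :: (a ++ b)) := by
  intro a
  induction a with
  | nil => intro c b u _ hG; exact ⟨Relation.ReflTransGen.refl, hG⟩
  | cons x a ih =>
    intro c b u hmin hG
    have hG' : Good P ((c ++ [x]) ++ (a ++ u :: b)) := by
      simpa [List.append_assoc] using hG
    obtain ⟨hrtg, hGood⟩ := ih (c ++ [x]) b u (fun y hy => hmin y (List.mem_cons_of_mem _ hy)) hG'
    have heq1 : (c ++ [x]) ++ (a ++ u :: b) = c ++ ((x :: a) ++ u :: b) := by simp
    have heq2 : (c ++ [x]) ++ u :: (a ++ b) = c ++ x :: u :: (a ++ b) := by simp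
    have hGood' : Good P (c ++ x :: u :: (a ++ b)) := by
      simpa [List.append_assoc] using hGood
    have hGswap : Good P (c ++ u :: x :: (a ++ b)) :=
      good_swap hGood' (hmin x (List.mem_cons_self))
    have hstep : GS P (c ++ x :: u :: (a ++ b)) (c ++ u :: x :: (a ++ b)) :=
      ⟨c, x, u, a ++ b, rfl, rfl, hGood', hGswap⟩
    rw [heq1, heq2] at hrtg
    exact ⟨hrtg.tail hstep, hGswap⟩

lemma chain : ∀ (us c ts : List β), ts.Perm us → Good P (c ++ ts) → Good P (c ++ us) →
    Relation.ReflTransGen (GS P) (c ++ ts) (c ++ us) := by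
  intro us
  induction us with
  | nil =>
    intro c ts hperm _ _
    rw [List.perm_nil.mp hperm]
  | cons u us ih =>
    intro c ts hperm hG1 hG2
    have hu : u ∈ ts := hperm.symm.subset (List.mem_cons_self)
    obtain ⟨a, b, rfl⟩ := List.append_of_mem hu
    have hndts : (a ++ u :: b).Nodup :=
      hG1.1.sublist (List.sublist_append_right c _)
    have hua : u ∉ a := fun h =>
      (List.nodup_append.mp hndts).2.2 u h u List.mem_cons_self rfl
    have hmin : ∀ x ∈ a, Rle P u x := by
      intro x hx
      have hxts : x ∈ a ++ u :: b := List.mem_append_left _ hx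
      have hxus : x ∈ u :: us := hperm.subset hxts
      have hxne : x ≠ u := fun h => hua (h ▸ hx)
      have hxus' : x ∈ us := by
        rcases List.mem_cons.mp hxus with h | h
        · exact absurd h hxne
        · exact h
      obtain ⟨-, -, hpw⟩ := hG2
      obtain ⟨-, hpw2, -⟩ := List.pairwise_append.mp hpw
      exact (List.pairwise_cons.mp hpw2).1 x hxus'
    obtain ⟨hrtg, hGood⟩ := bubble a c b u hmin hG1
    have hperm' : (a ++ b).Perm us := by
      have h1 : (u :: (a ++ b)).Perm (u :: us) :=
        (List.perm_middle.symm.trans hperm)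
      exact (List.perm_cons u).mp h1
    have hG1' : Good P ((c ++ [u]) ++ (a ++ b)) := by
      simpa [List.append_assoc] using hGood
    have hG2' : Good P ((c ++ [u]) ++ us) := by
      simpa [List.append_assoc] using hG2
    have := ih (c ++ [u]) (a ++ b) hperm' hG1' hG2'
    refine hrtg.trans ?_
    simpa [List.append_assoc] using this

end Comb

lemma good_of_lin {P : RawProc S T α β} {σ : List T} (hσ : σ ∈ RawProc.Lin P) :
    ∃ ts : List β, Good P ts ∧ σ = ts.map P.projT := by
  obtain ⟨ts, h1, h2, h3, h4⟩ := hσ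
  refine ⟨ts, ⟨h1, h2, ?_⟩, h4⟩
  rw [List.pairwise_iff_get]
  intro i j hij hR
  exact absurd (h3 j.1 i.1 j.2 i.2 hR) (by omega)

end BDproof


/-- Best–Devillers: if two firing sequences `σ`, `ρ` of `N`
are linearisations of a common finite GR-process `P` (i.e. `Π(σ) ∩ Π(ρ) ≠ ∅`),
then `σ ↔* ρ`. -/
theorem common_process_implies_adjEquiv {S T α β : Type*} (N : Net S T)
    (σ ρ : List T) (hσ : N.FS σ) (hρ : N.FS ρ)
    (P : RawProc S T α β) (hP : IsProcessOf N P) (hPfin : P.FiniteProc)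
    (hσP : σ ∈ RawProc.Lin P) (hρP : ρ ∈ RawProc.Lin P) :
    N.AdjEquiv σ ρ := by
  obtain ⟨ts, hGts, rfl⟩ := good_of_lin hσP
  obtain ⟨us, hGus, rfl⟩ := good_of_lin hρP
  have hperm : ts.Perm us :=
    (List.perm_ext_iff_of_nodup hGts.1 hGus.1).mpr
      fun t => (hGts.2.1 t).trans (hGus.2.1 t).symm
  have hchain : Relation.ReflTransGen (GS P) ts us := by
    have := chain us ([] : List β) ts hperm (by simpa using hGts) (by simpa using hGus)
    simpa using this
  exact Relation.ReflTransGen.lift (List.map P.projT) (fun a b h => gs_adjacent hP h) _ _ hchain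
end

section
/- Let N be a net and σ, ρ firing sequences of N with σ ↔ ρ (σ and ρ adjacent). Then Π(σ) ∩ Π(ρ) ≠ ∅, i.e. there exists a finite GR-process P of N with σ ∈ Lin(P) and ρ ∈ Lin(P). -/
open scoped Classical

/-! ### Auxiliary development -/

namespace BDaux

variable {S T : Type*}

def encS (s : S) (j : ℕ) : BigCarrier S T := {(Sum.inl s, j)}
def encE (a : T) (i : ℕ) : BigCarrier S T := {(Sum.inr a, i)}

lemma encS_inj {s s' : S} {j j' : ℕ}
    (h : (encS s j : BigCarrier S T) = encS s' j') : s = s' ∧ j = j' := by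
  have := Set.singleton_eq_singleton_iff.mp h
  simpa [Prod.ext_iff] using this

lemma encE_inj {a a' : T} {i i' : ℕ}
    (h : (encE a i : BigCarrier S T) = encE a' i') : a = a' ∧ i = i' := by
  have := Set.singleton_eq_singleton_iff.mp h
  simpa [Prod.ext_iff] using this

lemma encS_ne_encE {s : S} {j : ℕ} {a : T} {i : ℕ} :
    (encS s j : BigCarrier S T) ≠ encE a i := by
  intro h
  have := Set.singleton_eq_singleton_iff.mp h
  simp [Prod.ext_iff] at this

lemma choose_encS {s : S} {j : ℕ}
    (h : ∃ p : S × ℕ, (encS s j : BigCarrier S T) = encS p.1 p.2) :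
    h.choose = (s, j) := by
  obtain ⟨h1, h2⟩ := encS_inj h.choose_spec
  exact Prod.ext h1.symm h2.symm

lemma choose_encE {a : T} {i : ℕ}
    (h : ∃ e : T × ℕ, (encE a i : BigCarrier S T) = encE e.1 e.2) :
    h.choose = (a, i) := by
  obtain ⟨h1, h2⟩ := encE_inj h.choose_spec
  exact Prod.ext h1.symm h2.symm

variable (N : Net S T) (L : List T)

/-- number of tokens of place `s` consumed by the first `i` transitions -/
def cc (i : ℕ) (s : S) : ℕ := ((L.take i).map fun a => N.pre a s).sum

/-- number of tokens of place `s` created before step `i` (including initial) -/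
def bc (i : ℕ) (s : S) : ℕ := N.M0 s + ((L.take i).map fun a => N.post a s).sum

lemma take_map_sum_mono (f : T → ℕ) {i i' : ℕ} (h : i ≤ i') :
    ((L.take i).map f).sum ≤ ((L.take i').map f).sum := by
  have h1 : L.take i = (L.take i').take i := by
    rw [List.take_take, min_eq_left h]
  rw [h1]
  conv_rhs => rw [← List.take_append_drop i (L.take i')]
  rw [List.map_append, List.sum_append]
  exact Nat.le_add_right _ _

lemma cc_mono {i i' : ℕ} (h : i ≤ i') (s : S) : cc N L i s ≤ cc N L i' s :=
  take_map_sum_mono L _ h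

lemma bc_mono {i i' : ℕ} (h : i ≤ i') (s : S) : bc N L i s ≤ bc N L i' s :=
  Nat.add_le_add_left (take_map_sum_mono L _ h) _

lemma cc_succ {i : ℕ} (hi : i < L.length) (s : S) :
    cc N L (i + 1) s = cc N L i s + N.pre L[i] s := by
  simp only [cc]
  rw [List.take_succ, List.getElem?_eq_getElem hi]
  simp only [List.map_append, List.sum_append, Option.toList_some, List.map_cons,
    List.map_nil, List.sum_cons, List.sum_nil]
  omega

lemma bc_succ {i : ℕ} (hi : i < L.length) (s : S) :
    bc N L (i + 1) s = bc N L i s + N.post L[i] s := by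
  simp only [bc]
  rw [List.take_succ, List.getElem?_eq_getElem hi]
  simp only [List.map_append, List.sum_append, Option.toList_some, List.map_cons,
    List.map_nil, List.sum_cons, List.sum_nil]
  omega

lemma bc_zero (s : S) : bc N L 0 s = N.M0 s := by simp [bc]

lemma mark_sum : ∀ (L : List T) (M M' : S → ℕ), N.FireSeq M L M' → ∀ s,
    M' s + (L.map fun a => N.pre a s).sum = M s + (L.map fun a => N.post a s).sum := by
  intro L
  induction L with
  | nil => intro M M' h s; simp [Net.FireSeq] at h; simp [h]
  | cons a L' ih =>
    intro M M' h s
    obtain ⟨M₁, ⟨⟨-, hpre⟩, hM₁⟩, hf'⟩ := h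
    have hpa : N.pre a s ≤ M s := by simpa [Net.preM] using hpre s
    have hM₁s : M₁ s = M s - N.pre a s + N.post a s := by
      simpa [Net.preM, Net.postM] using hM₁ s
    have := ih M₁ M' hf' s
    simp only [List.map_cons, List.sum_cons]
    omega

lemma key_count : ∀ (L : List T) (M M' : S → ℕ), N.FireSeq M L M' →
    ∀ i, i < L.length → ∀ s,
    ((L.take (i+1)).map fun a => N.pre a s).sum ≤
      M s + ((L.take i).map fun a => N.post a s).sum := by
  intro L
  induction L with
  | nil => intro M M' _ i hi; simp at hi
  | cons a L' ih =>
    intro M M' h i hi s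
    obtain ⟨M₁, ⟨⟨-, hpre⟩, hM₁⟩, hf'⟩ := h
    have hpa : N.pre a s ≤ M s := by simpa [Net.preM] using hpre s
    have hM₁s : M₁ s = M s - N.pre a s + N.post a s := by
      simpa [Net.preM, Net.postM] using hM₁ s
    cases i with
    | zero => simpa using hpa
    | succ j =>
      have hj : j < L'.length := by simpa using hi
      have := ih M₁ M' hf' j hj s
      simp only [List.take_succ_cons, List.map_cons, List.sum_cons]
      omega

variable (d : T) (dS : S)

/-- The process constructed from the firing sequence `L`, with FIFO token policy. -/
noncomputable def proc : RawProc S T (BigCarrier S T) (BigCarrier S T) where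
  places := {x | ∃ s j, j < bc N L L.length s ∧ x = encS s j}
  transitions := {x | ∃ i, i < L.length ∧ x = encE (L.getD i d) i}
  flowPT x y := if ∃ s j i, i < L.length ∧ x = encS s j ∧ y = encE (L.getD i d) i ∧
      cc N L i s ≤ j ∧ j < cc N L (i+1) s then 1 else 0
  flowTP y x := if ∃ s j i, i < L.length ∧ x = encS s j ∧ y = encE (L.getD i d) i ∧
      bc N L i s ≤ j ∧ j < bc N L (i+1) s then 1 else 0
  initMark x := if ∃ s j, x = encS s j ∧ j < N.M0 s then 1 else 0
  projS x := if h : ∃ p : S × ℕ, x = encS p.1 p.2 then h.choose.1 else dS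
  projT x := if h : ∃ e : T × ℕ, x = encE e.1 e.2 then h.choose.1 else d

lemma projS_encS (s : S) (j : ℕ) : (proc N L d dS).projS (encS s j) = s := by
  have h : ∃ p : S × ℕ, (encS s j : BigCarrier S T) = encS p.1 p.2 := ⟨(s, j), rfl⟩
  simp only [proc, dif_pos h, choose_encS h]

lemma projT_encE (a : T) (i : ℕ) : (proc N L d dS).projT (encE a i) = a := by
  have h : ∃ e : T × ℕ, (encE a i : BigCarrier S T) = encE e.1 e.2 := ⟨(a, i), rfl⟩
  simp only [proc, dif_pos h, choose_encE h]

lemma flowPT_ne {x y} (h : (proc N L d dS).flowPT x y ≠ 0) :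
    ∃ s j i, i < L.length ∧ x = encS s j ∧ y = encE (L.getD i d) i ∧
      cc N L i s ≤ j ∧ j < cc N L (i+1) s := by
  by_contra hc
  exact h (if_neg hc)

lemma flowTP_ne {x y} (h : (proc N L d dS).flowTP y x ≠ 0) :
    ∃ s j i, i < L.length ∧ x = encS s j ∧ y = encE (L.getD i d) i ∧
      bc N L i s ≤ j ∧ j < bc N L (i+1) s := by
  by_contra hc
  exact h (if_neg hc)

lemma flowPT_eq_one {s j i} (hi : i < L.length) (h1 : cc N L i s ≤ j)
    (h2 : j < cc N L (i+1) s) :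
    (proc N L d dS).flowPT (encS s j) (encE (L.getD i d) i) = 1 :=
  if_pos ⟨s, j, i, hi, rfl, rfl, h1, h2⟩

lemma flowTP_eq_one {s j i} (hi : i < L.length) (h1 : bc N L i s ≤ j)
    (h2 : j < bc N L (i+1) s) :
    (proc N L d dS).flowTP (encE (L.getD i d) i) (encS s j) = 1 :=
  if_pos ⟨s, j, i, hi, rfl, rfl, h1, h2⟩

lemma initMark_encS {s : S} {j : ℕ} (hj : j < N.M0 s) :
    (proc N L d dS).initMark (encS s j) = 1 :=
  if_pos ⟨s, j, rfl, hj⟩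

lemma initMark_ne {x} (h : (proc N L d dS).initMark x ≠ 0) :
    ∃ s j, x = encS s j ∧ j < N.M0 s := by
  by_contra hc
  exact h (if_neg hc)

noncomputable def birth (s : S) (j : ℕ) : ℕ :=
  if h : ∃ i, j < bc N L i s then Nat.find h else 0

lemma birth_le {s j i} (h : j < bc N L i s) : birth N L s j ≤ i := by
  rw [birth, dif_pos ⟨i, h⟩]
  exact Nat.find_le h

lemma birth_eq {s j i} (h1 : bc N L i s ≤ j) (h2 : j < bc N L (i+1) s) :
    birth N L s j = i + 1 := by
  rw [birth, dif_pos ⟨i + 1, h2⟩, Nat.find_eq_iff]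
  refine ⟨h2, fun m hm => not_lt.2 (le_trans (bc_mono N L (by omega) s) h1)⟩

noncomputable def rank : (BigCarrier S T ⊕ BigCarrier S T) → ℕ
  | Sum.inl x => if h : ∃ p : S × ℕ, x = encS p.1 p.2 then
      2 * birth N L h.choose.1 h.choose.2 else 0
  | Sum.inr y => if h : ∃ e : T × ℕ, y = encE e.1 e.2 then 2 * h.choose.2 + 1 else 0

lemma rank_inl (s : S) (j : ℕ) :
    rank N L (Sum.inl (encS s j) : BigCarrier S T ⊕ BigCarrier S T) = 2 * birth N L s j := by
  have h : ∃ p : S × ℕ, (encS s j : BigCarrier S T) = encS p.1 p.2 := ⟨(s, j), rfl⟩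
  simp only [rank, dif_pos h, choose_encS h]

lemma rank_inr (a : T) (i : ℕ) :
    rank N L (Sum.inr (encE a i) : BigCarrier S T ⊕ BigCarrier S T) = 2 * i + 1 := by
  have h : ∃ e : T × ℕ, (encE a i : BigCarrier S T) = encE e.1 e.2 := ⟨(a, i), rfl⟩
  simp only [rank, dif_pos h, choose_encE h]

/-- validity of the FIFO choice: every token consumed at step `i` was already created. -/
def Valid : Prop := ∀ i < L.length, ∀ s, cc N L (i+1) s ≤ bc N L i s

lemma rank_lt (Hv : Valid N L) {x y} (h : (proc N L d dS).flowRel x y) :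
    rank N L x < rank N L y := by
  cases x with
  | inl p =>
    cases y with
    | inl q => simp [RawProc.flowRel] at h
    | inr e =>
      obtain ⟨s, j, i, hi, hx, hy, h1, h2⟩ := flowPT_ne N L d dS h
      subst hx; subst hy
      rw [rank_inl, rank_inr]
      have hj : j < bc N L i s := lt_of_lt_of_le h2 (Hv i hi s)
      have := birth_le N L hj
      omega
  | inr e =>
    cases y with
    | inr e' => simp [RawProc.flowRel] at h
    | inl p =>
      obtain ⟨s, j, i, hi, hx, hy, h1, h2⟩ := flowTP_ne N L d dS h
      subst hx; subst hy
      rw [rank_inl, rank_inr, birth_eq N L h1 h2]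
      omega

lemma rank_lt_trans (Hv : Valid N L) {x y}
    (h : Relation.TransGen (proc N L d dS).flowRel x y) :
    rank N L x < rank N L y := by
  induction h with
  | single h => exact rank_lt N L d dS Hv h
  | tail _ h ih => exact lt_trans ih (rank_lt N L d dS Hv h)

lemma rank_le_refl (Hv : Valid N L) {x y}
    (h : Relation.ReflTransGen (proc N L d dS).flowRel x y) :
    rank N L x ≤ rank N L y := by
  induction h with
  | refl => exact le_rfl
  | tail _ h ih => exact le_of_lt (lt_of_le_of_lt ih (rank_lt N L d dS Hv h))


lemma flowPT_le_one (x y) : (proc N L d dS).flowPT x y ≤ 1 := by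
  simp only [proc]; split <;> omega

lemma flowTP_le_one (y x) : (proc N L d dS).flowTP y x ≤ 1 := by
  simp only [proc]; split <;> omega

lemma exists_interval {s : S} {j : ℕ} (hj : j < bc N L L.length s) (hge : N.M0 s ≤ j) :
    ∃ i, i < L.length ∧ bc N L i s ≤ j ∧ j < bc N L (i+1) s := by
  have hex : ∃ m, j < bc N L m s := ⟨L.length, hj⟩
  have h0 : Nat.find hex ≠ 0 := by
    intro h0
    have := Nat.find_spec hex
    rw [h0, bc_zero] at this
    omega
  obtain ⟨i, hi⟩ := Nat.exists_eq_succ_of_ne_zero h0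
  have hfind := Nat.find_spec hex
  have hmin := Nat.find_min hex (show i < Nat.find hex by omega)
  have hle : Nat.find hex ≤ L.length := Nat.find_le hj
  rw [hi] at hfind hle
  exact ⟨i, by omega, by omega, hfind⟩

lemma proc_finite : (proc N L d dS).FiniteProc := by
  have : (proc N L d dS).transitions = (fun i => encE (L.getD i d) i) '' Set.Iio L.length := by
    ext x
    simp only [proc, Set.mem_setOf_eq, Set.mem_image, Set.mem_Iio]
    constructor
    · rintro ⟨i, hi, rfl⟩; exact ⟨i, hi, rfl⟩
    · rintro ⟨i, hi, rfl⟩; exact ⟨i, hi, rfl⟩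
  rw [RawProc.FiniteProc, this]
  exact (Set.finite_Iio _).image _

lemma proc_isProcess (Hv : Valid N L) : IsProcessOf N (proc N L d dS) := by
  constructor
  case flowPT_dom =>
    intro p tr h
    obtain ⟨s, j, i, hi, rfl, rfl, h1, h2⟩ := flowPT_ne N L d dS h
    refine ⟨⟨s, j, ?_, rfl⟩, ⟨i, hi, rfl⟩⟩
    have hv := Hv i hi s
    have hm := bc_mono N L hi.le s
    omega
  case flowTP_dom =>
    intro tr p h
    obtain ⟨s, j, i, hi, rfl, rfl, h1, h2⟩ := flowTP_ne N L d dS h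
    refine ⟨⟨s, j, ?_, rfl⟩, ⟨i, hi, rfl⟩⟩
    have hm := bc_mono N L (show i + 1 ≤ L.length by omega) s
    omega
  case initMark_dom =>
    intro p hp
    by_contra h
    obtain ⟨s, j, rfl, hj⟩ := initMark_ne N L d dS h
    have hm := bc_mono N L (Nat.zero_le L.length) s
    rw [bc_zero] at hm
    exact hp ⟨s, j, by omega, rfl⟩
  case pre_place =>
    intro p _
    refine ⟨?_, fun tr => flowTP_le_one N L d dS tr p⟩
    intro tr htr tr' htr'
    obtain ⟨s, j, i, hi, hp1, rfl, h1, h2⟩ := flowTP_ne N L d dS htr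
    obtain ⟨s', j', i', hi', hp2, rfl, h1', h2'⟩ := flowTP_ne N L d dS htr'
    rw [hp1] at hp2
    obtain ⟨rfl, rfl⟩ := encS_inj hp2
    have : i = i' := by
      rcases lt_trichotomy i i' with hlt | heq | hlt
      · have hb := bc_mono N L (show i + 1 ≤ i' by omega) s
        omega
      · exact heq
      · have hb := bc_mono N L (show i' + 1 ≤ i by omega) s
        omega
    rw [this]
  case post_place =>
    intro p _
    refine ⟨?_, fun tr => flowPT_le_one N L d dS p tr⟩
    intro tr htr tr' htr'
    obtain ⟨s, j, i, hi, hp1, rfl, h1, h2⟩ := flowPT_ne N L d dS htr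
    obtain ⟨s', j', i', hi', hp2, rfl, h1', h2'⟩ := flowPT_ne N L d dS htr'
    rw [hp1] at hp2
    obtain ⟨rfl, rfl⟩ := encS_inj hp2
    have : i = i' := by
      rcases lt_trichotomy i i' with hlt | heq | hlt
      · have hb := cc_mono N L (show i + 1 ≤ i' by omega) s
        omega
      · exact heq
      · have hb := cc_mono N L (show i' + 1 ≤ i by omega) s
        omega
    rw [this]
  case init_one =>
    rintro p ⟨s, j, hj, rfl⟩ hno
    have hjM : j < N.M0 s := by
      by_contra hge
      obtain ⟨i, hi, h1, h2⟩ := exists_interval N L hj (by omega)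
      have := flowTP_eq_one N L d dS hi h1 h2
      rw [hno] at this
      omega
    exact if_pos ⟨s, j, rfl, hjM⟩
  case init_zero =>
    rintro p ⟨s, j, hj, rfl⟩ ⟨tr, htr⟩
    obtain ⟨s', j', i, hi, hp, rfl, h1, h2⟩ := flowTP_ne N L d dS htr
    obtain ⟨rfl, rfl⟩ := encS_inj hp
    refine if_neg ?_
    rintro ⟨s'', j'', heq, hj''⟩
    obtain ⟨rfl, rfl⟩ := encS_inj heq
    have hm := bc_mono N L (Nat.zero_le i) s
    rw [bc_zero] at hm
    omega
  case acyclic =>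
    intro x hx
    exact absurd (rank_lt_trans N L d dS Hv hx) (lt_irrefl _)
  case finite_past =>
    intro tr _
    refine Set.Finite.subset ((Set.finite_Iio L.length).image fun i => encE (L.getD i d) i) ?_
    intro u hu
    obtain ⟨z, hz, -⟩ := Relation.TransGen.head'_iff.mp hu
    cases z with
    | inl p =>
      obtain ⟨s, j, i, hi, -, rfl, -, -⟩ := flowTP_ne N L d dS hz
      exact ⟨i, hi, rfl⟩
    | inr e => simp [RawProc.flowRel] at hz
  case t_pre_fin =>
    rintro tr ⟨i, hi, rfl⟩
    refine Set.Finite.subset (Set.Finite.biUnion (N.pre_fin (L.getD i d))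
      fun s _ => (Set.finite_Iio (cc N L (i+1) s)).image (encS s)) ?_
    intro p hp
    obtain ⟨s, j, i', hi', rfl, htr', h1, h2⟩ := flowPT_ne N L d dS hp
    obtain ⟨-, hii⟩ := encE_inj htr'
    subst hii
    have hcs := cc_succ N L hi s
    have hd : L.getD i d = L[i] := by
      simp [List.getD_eq_getElem?_getD, List.getElem?_eq_getElem hi]
    refine Set.mem_biUnion (show s ∈ {s | N.pre (L.getD i d) s ≠ 0} from ?_) ⟨j, h2, rfl⟩
    simp only [Set.mem_setOf_eq]
    rw [hd]
    omega
  case t_pre_ne =>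
    rintro tr ⟨i, hi, rfl⟩
    obtain ⟨s, hs⟩ := N.pre_ne (L.getD i d)
    refine ⟨encS s (cc N L i s), ?_⟩
    have hcs := cc_succ N L hi s
    have hd : L.getD i d = L[i] := by
      simp [List.getD_eq_getElem?_getD, List.getElem?_eq_getElem hi]
    rw [hd] at hs
    rw [flowPT_eq_one N L d dS hi le_rfl (by omega)]
    omega
  case t_post_fin =>
    rintro tr ⟨i, hi, rfl⟩
    refine Set.Finite.subset (Set.Finite.biUnion (N.post_fin (L.getD i d))
      fun s _ => (Set.finite_Iio (bc N L (i+1) s)).image (encS s)) ?_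
    intro p hp
    obtain ⟨s, j, i', hi', rfl, htr', h1, h2⟩ := flowTP_ne N L d dS hp
    obtain ⟨-, hii⟩ := encE_inj htr'
    subst hii
    have hcs := bc_succ N L hi s
    have hd : L.getD i d = L[i] := by
      simp [List.getD_eq_getElem?_getD, List.getElem?_eq_getElem hi]
    refine Set.mem_biUnion (show s ∈ {s | N.post (L.getD i d) s ≠ 0} from ?_) ⟨j, h2, rfl⟩
    simp only [Set.mem_setOf_eq]
    rw [hd]
    omega
  case proj_init_fin =>
    intro s
    refine Set.Finite.subset ((Set.finite_Iio (N.M0 s)).image (encS s)) ?_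
    rintro p ⟨hps, hne⟩
    obtain ⟨s', j, rfl, hj⟩ := initMark_ne N L d dS hne
    rw [projS_encS] at hps
    subst hps
    exact ⟨j, hj, rfl⟩
  case proj_init =>
    intro s
    have hinter : {p | (proc N L d dS).projS p = s} ∩ Function.support (proc N L d dS).initMark =
        ↑((Finset.range (N.M0 s)).image (fun j => (encS s j : BigCarrier S T))) ∩ Function.support (proc N L d dS).initMark := by
      ext p
      simp only [Set.mem_inter_iff, Function.mem_support, Set.mem_setOf_eq, Finset.coe_image,
        Set.mem_image, Finset.coe_range, Set.mem_Iio]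
      constructor
      · rintro ⟨hps, hne⟩
        obtain ⟨s', j, rfl, hj⟩ := initMark_ne N L d dS hne
        rw [projS_encS] at hps
        subst hps
        exact ⟨⟨j, hj, rfl⟩, hne⟩
      · rintro ⟨⟨j, hj, rfl⟩, hne⟩
        exact ⟨projS_encS N L d dS s j, hne⟩
    rw [finsum_mem_eq_sum_of_inter_support_eq _ hinter,
      Finset.sum_image (fun x _ y _ hxy => (encS_inj hxy).2)]
    rw [Finset.sum_congr rfl fun j hj =>
      initMark_encS N L d dS (Finset.mem_range.mp hj)]
    simp
  case proj_pre =>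
    rintro tr ⟨i, hi, rfl⟩ s
    rw [projT_encE]
    have hinter : {p | (proc N L d dS).projS p = s} ∩
        Function.support (fun p => (proc N L d dS).flowPT p (encE (L.getD i d) i)) =
        ↑((Finset.Ico (cc N L i s) (cc N L (i+1) s)).image (fun j => (encS s j : BigCarrier S T))) ∩
        Function.support (fun p => (proc N L d dS).flowPT p (encE (L.getD i d) i)) := by
      ext p
      simp only [Set.mem_inter_iff, Function.mem_support, Set.mem_setOf_eq, Finset.coe_image,
        Set.mem_image, Finset.coe_Ico, Set.mem_Ico]
      constructor
      · rintro ⟨hps, hne⟩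
        obtain ⟨s', j, i', hi', rfl, htr', h1, h2⟩ := flowPT_ne N L d dS hne
        obtain ⟨-, hii⟩ := encE_inj htr'
        subst hii
        rw [projS_encS] at hps
        subst hps
        exact ⟨⟨j, ⟨h1, h2⟩, rfl⟩, hne⟩
      · rintro ⟨⟨j, hj, rfl⟩, hne⟩
        exact ⟨projS_encS N L d dS s j, hne⟩
    rw [finsum_mem_eq_sum_of_inter_support_eq _ hinter,
      Finset.sum_image (fun x _ y _ hxy => (encS_inj hxy).2)]
    rw [Finset.sum_congr rfl fun j hj => by
      obtain ⟨h1, h2⟩ := Finset.mem_Ico.mp hj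
      exact flowPT_eq_one N L d dS hi h1 h2]
    have hcs := cc_succ N L hi s
    have hd : L.getD i d = L[i] := by
      simp [List.getD_eq_getElem?_getD, List.getElem?_eq_getElem hi]
    simp only [Finset.sum_const, smul_eq_mul, mul_one, Nat.card_Ico]
    rw [hd]
    omega
  case proj_post =>
    rintro tr ⟨i, hi, rfl⟩ s
    rw [projT_encE]
    have hinter : {p | (proc N L d dS).projS p = s} ∩
        Function.support (fun p => (proc N L d dS).flowTP (encE (L.getD i d) i) p) =
        ↑((Finset.Ico (bc N L i s) (bc N L (i+1) s)).image (fun j => (encS s j : BigCarrier S T))) ∩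
        Function.support (fun p => (proc N L d dS).flowTP (encE (L.getD i d) i) p) := by
      ext p
      simp only [Set.mem_inter_iff, Function.mem_support, Set.mem_setOf_eq, Finset.coe_image,
        Set.mem_image, Finset.coe_Ico, Set.mem_Ico]
      constructor
      · rintro ⟨hps, hne⟩
        obtain ⟨s', j, i', hi', rfl, htr', h1, h2⟩ := flowTP_ne N L d dS hne
        obtain ⟨-, hii⟩ := encE_inj htr'
        subst hii
        rw [projS_encS] at hps
        subst hps
        exact ⟨⟨j, ⟨h1, h2⟩, rfl⟩, hne⟩
      · rintro ⟨⟨j, hj, rfl⟩, hne⟩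
        exact ⟨projS_encS N L d dS s j, hne⟩
    rw [finsum_mem_eq_sum_of_inter_support_eq _ hinter,
      Finset.sum_image (fun x _ y _ hxy => (encS_inj hxy).2)]
    rw [Finset.sum_congr rfl fun j hj => by
      obtain ⟨h1, h2⟩ := Finset.mem_Ico.mp hj
      exact flowTP_eq_one N L d dS hi h1 h2]
    have hcs := bc_succ N L hi s
    have hd : L.getD i d = L[i] := by
      simp [List.getD_eq_getElem?_getD, List.getElem?_eq_getElem hi]
    simp only [Finset.sum_const, smul_eq_mul, mul_one, Nat.card_Ico]
    rw [hd]
    omega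

lemma getD_eq {i : ℕ} (hi : i < L.length) : L.getD i d = L[i] := by
  simp [List.getD_eq_getElem?_getD, List.getElem?_eq_getElem hi]

lemma proc_lin (Hv : Valid N L) : L ∈ RawProc.Lin (proc N L d dS) := by
  refine ⟨(List.range L.length).map fun i => encE (L.getD i d) i, ?_, ?_, ?_, ?_⟩
  · refine List.Nodup.map ?_ (List.nodup_range)
    intro i j hij
    exact (encE_inj hij).2
  · intro x
    simp only [List.mem_map, List.mem_range, proc, Set.mem_setOf_eq]
    constructor
    · rintro ⟨i, hi, rfl⟩; exact ⟨i, hi, rfl⟩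
    · rintro ⟨i, hi, rfl⟩; exact ⟨i, hi, rfl⟩
  · intro i j hi hj hpath
    simp only [List.get_eq_getElem, List.getElem_map, List.getElem_range] at hpath
    have := rank_le_refl N L d dS Hv hpath
    rw [rank_inr, rank_inr] at this
    omega
  · refine List.ext_getElem (by simp) ?_
    intro i h1 h2
    simp only [List.getElem_map, List.getElem_range, projT_encE]
    exact (getD_eq L d (by simpa using h1)).symm

/-- the transposition of `k` and `k+1` -/
def pm (k i : ℕ) : ℕ := if i = k then k + 1 else if i = k + 1 then k else i

lemma pm_invol (k i : ℕ) : pm k (pm k i) = i := by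
  unfold pm; split_ifs <;> omega

lemma pm_inj {k i j : ℕ} (h : pm k i = pm k j) : i = j := by
  have := congrArg (pm k) h
  rwa [pm_invol, pm_invol] at this

lemma pm_lt_aux {k i j : ℕ} (h1 : pm k i < pm k j) (h2 : j < i) : i = k + 1 ∧ j = k := by
  unfold pm at h1; split_ifs at h1 <;> omega

lemma pm_bound {k i n : ℕ} (hk : k + 1 < n) (hi : i < n) : pm k i < n := by
  unfold pm; split_ifs <;> omega

lemma no_path (Hv : Valid N L) {k : ℕ} (hk : k + 1 < L.length)
    (HB : ∀ s, cc N L (k+2) s ≤ bc N L k s) :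
    ¬ Relation.TransGen (proc N L d dS).flowRel
      (Sum.inr (encE (L.getD k d) k)) (Sum.inr (encE (L.getD (k+1) d) (k+1))) := by
  intro h
  obtain ⟨c, hc, hrest⟩ := Relation.TransGen.head'_iff.mp h
  cases c with
  | inr e => simp [RawProc.flowRel] at hc
  | inl p =>
    have hc' : (proc N L d dS).flowTP (encE (L.getD k d) k) p ≠ 0 := hc
    obtain ⟨s, j, i, hi, rfl, htr, h1, h2⟩ := flowTP_ne N L d dS hc'
    obtain ⟨-, hik⟩ := encE_inj htr
    subst hik
    rcases Relation.ReflTransGen.cases_head hrest with heq | ⟨c', hc2, hrest'⟩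
    · simp at heq
    · have hr1 := rank_lt N L d dS Hv hc2
      have hr2 := rank_le_refl N L d dS Hv hrest'
      rw [rank_inl, birth_eq N L h1 h2] at hr1
      rw [rank_inr] at hr2
      cases c' with
      | inl q => simp [RawProc.flowRel] at hc2
      | inr e' =>
        have hc2' : (proc N L d dS).flowPT (encS s j) e' ≠ 0 := hc2
        obtain ⟨s', j', i', hi', hpq, rfl, h1', h2'⟩ := flowPT_ne N L d dS hc2'
        obtain ⟨rfl, rfl⟩ := encS_inj hpq
        rw [rank_inr] at hr1
        rw [rank_inr] at hr2
        have hi'k : i' = k + 1 := by omega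
        subst hi'k
        have hB := HB s
        have h2'' : j < cc N L (k+2) s := h2'
        omega

lemma proc_lin_swap (Hv : Valid N L) {k : ℕ} (hk : k + 1 < L.length)
    (HB : ∀ s, cc N L (k+2) s ≤ bc N L k s) :
    ((List.range L.length).map fun i => L.getD (pm k i) d) ∈ RawProc.Lin (proc N L d dS) := by
  refine ⟨(List.range L.length).map fun i => encE (L.getD (pm k i) d) (pm k i), ?_, ?_, ?_, ?_⟩
  · refine List.Nodup.map ?_ (List.nodup_range)
    intro i j hij
    exact pm_inj (encE_inj hij).2
  · intro x
    simp only [List.mem_map, List.mem_range, proc, Set.mem_setOf_eq]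
    constructor
    · rintro ⟨i, hi, rfl⟩; exact ⟨pm k i, pm_bound hk hi, rfl⟩
    · rintro ⟨m, hm, rfl⟩
      refine ⟨pm k m, pm_bound hk hm, ?_⟩
      rw [pm_invol]
  · intro i j hi hj hpath
    simp only [List.get_eq_getElem, List.getElem_map, List.getElem_range] at hpath
    by_contra hij
    push_neg at hij
    have hle := rank_le_refl N L d dS Hv hpath
    rw [rank_inr, rank_inr] at hle
    have hpmle : pm k i ≤ pm k j := by omega
    rcases eq_or_lt_of_le hpmle with heq | hlt
    · exact absurd (pm_inj heq) (by omega)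
    · obtain ⟨hi1, hj1⟩ := pm_lt_aux hlt hij
      have e1 : pm k (k+1) = k := by unfold pm; split_ifs <;> omega
      have e2 : pm k k = k + 1 := by unfold pm; split_ifs <;> omega
      rw [hi1, hj1, e1, e2] at hpath
      rcases Relation.ReflTransGen.cases_head hpath with heq | ⟨c, hc, hrest⟩
      · have := (encE_inj (Sum.inr.inj heq)).2
        omega
      · exact no_path N L d dS Hv hk HB (Relation.TransGen.head' hc hrest)
  · refine List.ext_getElem (by simp) ?_
    intro i h1 h2
    simp only [List.getElem_map, List.getElem_range, projT_encE]

end BDaux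

/-- Best–Devillers: adjacent firing sequences of `N` are
linearisations of a common finite GR-process: `σ ↔ ρ` implies
`Π(σ) ∩ Π(ρ) ≠ ∅`. -/
theorem adjacent_implies_common_process {S T : Type*} (N : Net S T)
    (σ ρ : List T) (h : N.Adjacent σ ρ) :
    ∃ P : RawProc S T (BigCarrier S T) (BigCarrier S T),
      IsProcessOf N P ∧ P.FiniteProc ∧
      σ ∈ RawProc.Lin P ∧ ρ ∈ RawProc.Lin P := by
  obtain ⟨hσFS, hρFS, σ₁, t, u, σ₂, M, hσeq, hρeq, hM, hen⟩ := h
  subst hσeq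
  subst hρeq
  obtain ⟨Mf, hf⟩ := hσFS
  set dS := (N.pre_ne t).choose with hdS
  set L : List T := σ₁ ++ t :: u :: σ₂ with hL
  set k := σ₁.length with hk0
  have hlen : L.length = k + (σ₂.length + 2) := by simp [hL, hk0]
  have hk : k + 1 < L.length := by omega
  have Hv : BDaux.Valid N L := by
    intro i hi s
    exact BDaux.key_count N L N.M0 Mf hf i hi s
  have htakek : L.take k = σ₁ := List.take_left
  have htakek2 : L.take (k+2) = σ₁ ++ [t, u] := by
    rw [hL, List.take_append, List.take_of_length_le (by omega),
      show k + 2 - σ₁.length = 2 by omega]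
    rfl
  have HB : ∀ s, BDaux.cc N L (k+2) s ≤ BDaux.bc N L k s := by
    intro s
    have hms := BDaux.mark_sum N σ₁ N.M0 M hM s
    have hent : N.pre t s + N.pre u s ≤ M s := by
      have := hen.2 s
      simpa [Net.preM] using this
    have hcc : BDaux.cc N L (k+2) s =
        (σ₁.map fun a => N.pre a s).sum + (N.pre t s + N.pre u s) := by
      rw [BDaux.cc, htakek2, List.map_append, List.sum_append]
      simp
    have hbc : BDaux.bc N L k s = N.M0 s + (σ₁.map fun a => N.post a s).sum := by
      rw [BDaux.bc, htakek]
    omega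
  refine ⟨BDaux.proc N L t dS, BDaux.proc_isProcess N L t dS Hv, BDaux.proc_finite N L t dS,
    BDaux.proc_lin N L t dS Hv, ?_⟩
  have hρeq2 : σ₁ ++ u :: t :: σ₂ =
      (List.range L.length).map fun i => L.getD (BDaux.pm k i) t := by
    refine List.ext_getElem (by simp [hL]) ?_
    intro i h1 h2
    have hiL : i < L.length := by simpa using h2
    simp only [List.getElem_map, List.getElem_range]
    have hpmb : BDaux.pm k i < L.length := BDaux.pm_bound hk hiL
    rw [BDaux.getD_eq L t hpmb]
    rcases lt_trichotomy i k with hik | rfl | hik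
    · simp only [show BDaux.pm k i = i from by unfold BDaux.pm; split_ifs <;> omega, hL]
      rw [List.getElem_append_left (show i < σ₁.length from by omega),
          List.getElem_append_left (show i < σ₁.length from by omega)]
    · simp only [show BDaux.pm k k = k + 1 from by unfold BDaux.pm; split_ifs <;> omega, hL]
      rw [List.getElem_append_right (show σ₁.length ≤ k from by omega),
          List.getElem_append_right (show σ₁.length ≤ k + 1 from by omega)]
      simp only [show k - σ₁.length = 0 from by omega,
        show k + 1 - σ₁.length = 1 from by omega]
      rfl
    · rcases eq_or_lt_of_le (show k + 1 ≤ i from by omega) with hik1 | hik1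
      · simp only [show BDaux.pm k i = k from by unfold BDaux.pm; split_ifs <;> omega, hL]
        rw [List.getElem_append_right (show σ₁.length ≤ i from by omega),
            List.getElem_append_right (show σ₁.length ≤ k from by omega)]
        simp only [show i - σ₁.length = 1 from by omega,
          show k - σ₁.length = 0 from by omega]
        rfl
      · simp only [show BDaux.pm k i = i from by unfold BDaux.pm; split_ifs <;> omega, hL]
        rw [List.getElem_append_right (show σ₁.length ≤ i from by omega),
            List.getElem_append_right (show σ₁.length ≤ i from by omega)]
        obtain ⟨m, hm⟩ : ∃ m, i - σ₁.length = m + 2 := ⟨i - σ₁.length - 2, by omega⟩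
        simp only [hm]
        rfl
  rw [hρeq2]
  exact BDaux.proc_lin_swap N L t dS Hv hk HB
end

section
/- Let N be a net and P, Q finite GR-processes of N with P ≈s Q (P and Q one step swapping equivalent). Then Lin(P) ∩ Lin(Q) ≠ ∅. -/
open scoped Classical

section TopoSort

private lemma exists_rmin {β : Type*} (r : β → β → Prop) (htr : Transitive r)
    (hirr : ∀ a, ¬ r a a) (fs : Finset β) :
    fs.Nonempty → ∃ m ∈ fs, ∀ x ∈ fs, ¬ r x m := by
  classical
  induction fs using Finset.strongInduction with
  | _ fs ih =>
    rintro ⟨a, ha⟩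
    by_cases h : ∃ x ∈ fs, r x a
    · obtain ⟨b, hb, hba⟩ := h
      set s' := fs.filter (fun x => r x a) with hs'
      have hsub : s' ⊆ fs := Finset.filter_subset _ _
      have hss : s' ⊂ fs := (Finset.ssubset_iff_of_subset hsub).mpr
        ⟨a, ha, fun hx => hirr a (Finset.mem_filter.mp hx).2⟩
      obtain ⟨m, hm, hmin⟩ := ih s' hss ⟨b, Finset.mem_filter.mpr ⟨hb, hba⟩⟩
      have hma : r m a := (Finset.mem_filter.mp hm).2
      exact ⟨m, hsub hm, fun x hx hxm =>
        hmin x (Finset.mem_filter.mpr ⟨hx, htr hxm hma⟩) hxm⟩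
    · exact ⟨a, ha, fun x hx hxa => h ⟨x, hx, hxa⟩⟩

private lemma topo_sort {β : Type*} (r : β → β → Prop) (htr : Transitive r)
    (hirr : ∀ a, ¬ r a a) (fs : Finset β) :
    ∃ l : List β, l.Nodup ∧ (∀ x, x ∈ l ↔ x ∈ fs) ∧
      ∀ (i j : ℕ) (hi : i < l.length) (hj : j < l.length),
        r (l.get ⟨i, hi⟩) (l.get ⟨j, hj⟩) → i < j := by
  classical
  induction fs using Finset.strongInduction with
  | _ fs ih =>
    rcases fs.eq_empty_or_nonempty with rfl | hne
    · exact ⟨[], List.nodup_nil, by simp, fun i j hi => by simp at hi⟩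
    · obtain ⟨m, hm, hmin⟩ := exists_rmin r htr hirr fs hne
      obtain ⟨l, hnd, hmem, hord⟩ := ih (fs.erase m) (Finset.erase_ssubset hm)
      have hml : m ∉ l := fun hml => (Finset.mem_erase.mp ((hmem m).mp hml)).1 rfl
      refine ⟨m :: l, List.nodup_cons.mpr ⟨hml, hnd⟩, ?_, ?_⟩
      · intro x
        rw [List.mem_cons, hmem, Finset.mem_erase]
        constructor
        · rintro (rfl | ⟨_, hx⟩)
          · exact hm
          · exact hx
        · intro hx
          by_cases hxm : x = m
          · exact Or.inl hxm
          · exact Or.inr ⟨hxm, hx⟩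
      · intro i j hi hj hr
        cases i with
        | zero =>
          cases j with
          | zero => exact absurd hr (hirr _)
          | succ j => exact Nat.succ_pos j
        | succ i =>
          have hi' : i < l.length := Nat.lt_of_succ_lt_succ hi
          cases j with
          | zero =>
            exfalso
            have hfs : l.get ⟨i, hi'⟩ ∈ fs :=
              Finset.mem_of_mem_erase ((hmem _).mp (l.get_mem _))
            exact hmin _ hfs hr
          | succ j =>
            have hj' : j < l.length := Nat.lt_of_succ_lt_succ hj
            exact Nat.succ_lt_succ (hord i j hi' hj' hr)

end TopoSort


/-- Best–Devillers: one step swapping equivalent finite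
GR-processes of `N` have a common linearisation: `P ≈s Q` implies
`Lin(P) ∩ Lin(Q) ≠ ∅`. -/
theorem swapStep_implies_common_linearisation {S T α β : Type*} (N : Net S T)
    (P Q : RawProc S T α β) (hP : IsProcessOf N P) (hQ : IsProcessOf N Q)
    (hPfin : P.FiniteProc) (hQfin : Q.FiniteProc)
    (h : RawProc.SwapStep P Q) :
    (RawProc.Lin P ∩ RawProc.Lin Q).Nonempty := by
  classical
  obtain ⟨p, q, hpP, hqP, hprojpq, hcpq, hcqp, hiso⟩ := h
  obtain ⟨fS, fT, hfS, hfT, hflow, hinitm, hprojS, hprojT⟩ := hiso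
  -- decomposition of the edges of the swapped process
  have hP'edge : ∀ x y, (P.swap p q).flowRel x y →
      P.flowRel x y ∨ (x = Sum.inl p ∧ P.flowRel (Sum.inl q) y) ∨
        (x = Sum.inl q ∧ P.flowRel (Sum.inl p) y) := by
    rintro (a | a) (b | b) hxy
    · exact hxy.elim
    · have hxy' : (if a = p then P.flowPT q b else if a = q then P.flowPT p b
          else P.flowPT a b) ≠ 0 := hxy
      by_cases h1 : a = p
      · subst h1
        simp only [if_pos rfl] at hxy'
        exact Or.inr (Or.inl ⟨rfl, hxy'⟩)
      · simp only [if_neg h1] at hxy'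
        by_cases h2 : a = q
        · subst h2
          simp only [if_pos rfl] at hxy'
          exact Or.inr (Or.inr ⟨rfl, hxy'⟩)
        · simp only [if_neg h2] at hxy'
          exact Or.inl hxy'
    · exact Or.inl hxy
    · exact hxy.elim
  set U : (α ⊕ β) → (α ⊕ β) → Prop :=
    fun x y => P.flowRel x y ∨ (P.swap p q).flowRel x y with hU
  have key : ∀ x y, Relation.TransGen U x y →
      Relation.TransGen P.flowRel x y ∨
        ((Relation.ReflTransGen P.flowRel x (Sum.inl p) ∨
          Relation.ReflTransGen P.flowRel x (Sum.inl q)) ∧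
         (Relation.TransGen P.flowRel (Sum.inl p) y ∨
          Relation.TransGen P.flowRel (Sum.inl q) y)) := by
    intro x y hxy
    induction hxy with
    | @single c hc =>
      rcases hc with hc | hc
      · exact Or.inl (Relation.TransGen.single hc)
      · rcases hP'edge _ _ hc with hc2 | ⟨rfl, hc2⟩ | ⟨rfl, hc2⟩
        · exact Or.inl (Relation.TransGen.single hc2)
        · exact Or.inr ⟨Or.inl Relation.ReflTransGen.refl,
            Or.inr (Relation.TransGen.single hc2)⟩
        · exact Or.inr ⟨Or.inr Relation.ReflTransGen.refl,
            Or.inl (Relation.TransGen.single hc2)⟩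
    | @tail b c hxb hbc ih =>
      have hbc' : P.flowRel b c ∨ (b = Sum.inl p ∧ P.flowRel (Sum.inl q) c) ∨
          (b = Sum.inl q ∧ P.flowRel (Sum.inl p) c) := by
        rcases hbc with hbc | hbc
        · exact Or.inl hbc
        · exact hP'edge _ _ hbc
      rcases hbc' with hbc' | ⟨rfl, hbc'⟩ | ⟨rfl, hbc'⟩
      · rcases ih with ih | ⟨ih1, ih2⟩
        · exact Or.inl (ih.tail hbc')
        · exact Or.inr ⟨ih1, ih2.imp (fun h => h.tail hbc') (fun h => h.tail hbc')⟩
      · rcases ih with ih | ⟨ih1, ih2⟩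
        · exact Or.inr ⟨Or.inl ih.to_reflTransGen,
            Or.inr (Relation.TransGen.single hbc')⟩
        · rcases ih2 with ih2 | ih2
          · exact absurd ih2 (hP.acyclic _)
          · exact absurd ih2 hcqp
      · rcases ih with ih | ⟨ih1, ih2⟩
        · exact Or.inr ⟨Or.inr ih.to_reflTransGen,
            Or.inl (Relation.TransGen.single hbc')⟩
        · rcases ih2 with ih2 | ih2
          · exact absurd ih2 hcpq
          · exact absurd ih2 (hP.acyclic _)
  have hUacyc : ∀ x, ¬ Relation.TransGen U x x := by
    intro x hx
    rcases key x x hx with hT | ⟨h1, h2⟩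
    · exact hP.acyclic x hT
    · rcases h1 with h1 | h1 <;> rcases h2 with h2 | h2
      · exact hP.acyclic _ (h2.trans_left h1)
      · exact hcqp (h2.trans_left h1)
      · exact hcpq (h2.trans_left h1)
      · exact hP.acyclic _ (h2.trans_left h1)
  set r : β → β → Prop :=
    fun a b => Relation.TransGen U (Sum.inr a) (Sum.inr b) with hr
  have htr : Transitive r := fun a b c h₁ h₂ => h₁.trans h₂
  have hirr : ∀ a, ¬ r a a := fun a ha => hUacyc _ ha
  obtain ⟨ts, hnd, hmemF, hord⟩ := topo_sort r htr hirr hPfin.toFinset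
  have hmem : ∀ t, t ∈ ts ↔ t ∈ P.transitions := fun t =>
    (hmemF t).trans (Set.Finite.mem_toFinset hPfin)
  have hgetmem : ∀ (i : ℕ) (hi : i < ts.length), ts.get ⟨i, hi⟩ ∈ P.transitions :=
    fun i hi => (hmem _).mp (ts.get_mem _)
  have hidx : ∀ (i j : ℕ) (hi : i < ts.length) (hj : j < ts.length),
      (ts.get ⟨i, hi⟩ = ts.get ⟨j, hj⟩ ∨ r (ts.get ⟨i, hi⟩) (ts.get ⟨j, hj⟩)) →
      i ≤ j := by
    intro i j hi hj hh
    rcases hh with he | hrr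
    · exact le_of_eq (Fin.mk_eq_mk.mp (hnd.get_inj_iff.mp he))
    · exact (hord i j hi hj hrr).le
  have hLinP : ts.map P.projT ∈ RawProc.Lin P := by
    refine ⟨ts, hnd, hmem, ?_, rfl⟩
    intro i j hi hj hij
    rcases Relation.reflTransGen_iff_eq_or_transGen.mp hij with he | ht
    · exact hidx i j hi hj (Or.inl (Sum.inr.inj he).symm)
    · exact hidx i j hi hj (Or.inr (Relation.TransGen.mono (fun x y hxy => Or.inl hxy) _ _ ht))
  -- pulling back paths of Q to paths of the swapped process
  set dom : α ⊕ β → Prop := Sum.elim (· ∈ P.places) (· ∈ P.transitions) with hdom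
  have domr : ∀ t, t ∈ P.transitions → dom (Sum.inr t) := fun t ht => ht
  have edge_pull : ∀ x y : α ⊕ β, dom x → dom y →
      Q.flowRel (Sum.map fS fT x) (Sum.map fS fT y) → (P.swap p q).flowRel x y := by
    rintro (a | a) (b | b) hx hy hxy
    · exact hxy.elim
    · exact fun h0 => hxy ((hflow a hx b hy).1.trans h0)
    · exact fun h0 => hxy ((hflow b hy a hx).2.trans h0)
    · exact hxy.elim
  have node_pull : ∀ x : α ⊕ β, dom x → ∀ w, Q.flowRel (Sum.map fS fT x) w →
      ∃ x', dom x' ∧ Sum.map fS fT x' = w := by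
    rintro (a | a) hx (w | w) hw
    · exact hw.elim
    · obtain ⟨b, hb, rfl⟩ := hfT.2.2 (hQ.flowPT_dom _ _ hw).2
      exact ⟨Sum.inr b, hb, rfl⟩
    · obtain ⟨b, hb, rfl⟩ := hfS.2.2 (hQ.flowTP_dom _ _ hw).1
      exact ⟨Sum.inl b, hb, rfl⟩
    · exact hw.elim
  have pull : ∀ (y : α ⊕ β), dom y → ∀ w,
      Relation.TransGen Q.flowRel w (Sum.map fS fT y) →
      ∀ x, dom x → Sum.map fS fT x = w →
        Relation.TransGen (P.swap p q).flowRel x y := by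
    intro y hy w hw
    induction hw using Relation.TransGen.head_induction_on with
    | single hwy =>
      intro x hx hgx
      subst hgx
      exact Relation.TransGen.single (edge_pull x y hx hy hwy)
    | head hwc hc ihc =>
      intro x hx hgx
      subst hgx
      obtain ⟨x', hx', hgx'⟩ := node_pull x hx _ hwc
      have hwc' : Q.flowRel (Sum.map fS fT x) (Sum.map fS fT x') := by
        rw [hgx']; exact hwc
      exact Relation.TransGen.head (edge_pull x x' hx hx' hwc') (ihc x' hx' hgx')
  set us := ts.map fT with hus
  have husnd : us.Nodup := hnd.map_on
    (fun x hx y hy hxy => hfT.2.1 ((hmem x).mp hx) ((hmem y).mp hy) hxy)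
  have husmem : ∀ u, u ∈ us ↔ u ∈ Q.transitions := by
    intro u
    constructor
    · intro hu
      obtain ⟨t, ht, rfl⟩ := List.mem_map.mp hu
      exact hfT.1 ((hmem t).mp ht)
    · intro hu
      obtain ⟨t, ht, rfl⟩ := hfT.2.2 hu
      exact List.mem_map.mpr ⟨t, (hmem t).mpr ht, rfl⟩
  have huslen : us.length = ts.length := List.length_map _
  have husget : ∀ (i : ℕ) (hi : i < us.length),
      us.get ⟨i, hi⟩ = fT (ts.get ⟨i, huslen ▸ hi⟩) := by
    intro i hi
    simp [hus, List.get_eq_getElem]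
  have hLinQ : ts.map P.projT ∈ RawProc.Lin Q := by
    refine ⟨us, husnd, husmem, ?_, ?_⟩
    · intro i j hi hj hij
      have hi' : i < ts.length := huslen ▸ hi
      have hj' : j < ts.length := huslen ▸ hj
      rw [husget i hi, husget j hj] at hij
      rcases Relation.reflTransGen_iff_eq_or_transGen.mp hij with he | ht
      · exact hidx i j hi' hj' (Or.inl
          ((hfT.2.1 (hgetmem j hj') (hgetmem i hi') (Sum.inr.inj he)).symm))
      · have hP't : Relation.TransGen (P.swap p q).flowRel
            (Sum.inr (ts.get ⟨i, hi'⟩)) (Sum.inr (ts.get ⟨j, hj'⟩)) :=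
          pull (Sum.inr (ts.get ⟨j, hj'⟩)) (domr _ (hgetmem j hj')) _ ht
            (Sum.inr (ts.get ⟨i, hi'⟩)) (domr _ (hgetmem i hi')) rfl
        exact hidx i j hi' hj' (Or.inr (Relation.TransGen.mono (fun x y hxy => Or.inr hxy) _ _ hP't))
    · rw [hus, List.map_map]
      exact (List.map_congr_left fun t ht => hprojT t ((hmem t).mp ht)).symm
  exact ⟨ts.map P.projT, hLinP, hLinQ⟩
end

section
/- Let N be a structural conflict net. Then every FS-run R of N is conflict-free. -/
open scoped Classical

section Aux

namespace Net

variable {S T : Type*} (N : Net S T)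

lemma preM_singleton (t : T) (s : S) : N.preM {t} s = N.pre t s := by
  simp [preM]

lemma postM_singleton (t : T) (s : S) : N.postM {t} s = N.post t s := by
  simp [postM]

lemma preM_pair (t u : T) (s : S) :
    N.preM (t ::ₘ {u}) s = N.pre t s + N.pre u s := by
  simp [preM]

lemma preM_replicate (k : ℕ) (t : T) (s : S) :
    N.preM (Multiset.replicate k t) s = k * N.pre t s := by
  simp [preM, Multiset.map_replicate, Multiset.sum_replicate]

lemma fireSeq_det : ∀ (σ : List T) {M M₁ M₂ : S → ℕ},
    N.FireSeq M σ M₁ → N.FireSeq M σ M₂ → M₁ = M₂ := by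
  intro σ
  induction σ with
  | nil => intro M M₁ M₂ h1 h2; simp [FireSeq] at h1 h2; rw [h1, h2]
  | cons a σ ih =>
      rintro M M₁ M₂ ⟨Ma, ⟨_, ha⟩, h1⟩ ⟨Mb, ⟨_, hb⟩, h2⟩
      have hab : Ma = Mb := funext fun s => by rw [ha s, hb s]
      subst hab
      exact ih h1 h2

lemma fireSeq_append {σ ρ : List T} : ∀ {M M' : S → ℕ},
    N.FireSeq M (σ ++ ρ) M' ↔ ∃ M₁, N.FireSeq M σ M₁ ∧ N.FireSeq M₁ ρ M' := by
  induction σ with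
  | nil => intro M M'; simp [FireSeq]
  | cons a σ ih =>
      intro M M'
      constructor
      · rintro ⟨M₁, hstep, h⟩
        obtain ⟨M₂, h1, h2⟩ := ih.1 h
        exact ⟨M₂, ⟨M₁, hstep, h1⟩, h2⟩
      · rintro ⟨M₂, ⟨M₁, hstep, h1⟩, h2⟩
        exact ⟨M₁, hstep, ih.2 ⟨M₂, h1, h2⟩⟩

lemma enabled_pair_symm {M : S → ℕ} {t u : T} (h : N.Enabled M (t ::ₘ {u})) :
    N.Enabled M (u ::ₘ {t}) := by
  refine ⟨by simp, fun s => ?_⟩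
  have := h.2 s
  rw [preM_pair] at this ⊢
  omega

lemma swap_front {M M' : S → ℕ} {t u : T} {σ₂ : List T}
    (hen : N.Enabled M (t ::ₘ {u})) (h : N.FireSeq M (t :: u :: σ₂) M') :
    N.FireSeq M (u :: t :: σ₂) M' := by
  obtain ⟨M₁, ⟨⟨_, ht⟩, hM₁⟩, M₂, ⟨⟨_, hu⟩, hM₂⟩, hrest⟩ := h
  have key : ∀ s, N.pre t s + N.pre u s ≤ M s := by
    intro s; have := hen.2 s; rwa [preM_pair] at this
  refine ⟨fun s => M s - N.pre u s + N.post u s,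
    ⟨⟨by simp, fun s => ?_⟩, fun s => ?_⟩, M₂,
    ⟨⟨by simp, fun s => ?_⟩, fun s => ?_⟩, hrest⟩
  · show N.preM {u} s ≤ M s
    rw [preM_singleton]; have := key s; omega
  · show M s - N.pre u s + N.post u s = M s - N.preM {u} s + N.postM {u} s
    rw [preM_singleton, postM_singleton]
  · show N.preM {t} s ≤ M s - N.pre u s + N.post u s
    rw [preM_singleton]; have := key s; omega
  · show M₂ s = M s - N.pre u s + N.post u s - N.preM {t} s + N.postM {t} s
    have h1 := hM₁ s
    have h2 := hM₂ s
    simp only [preM_singleton, postM_singleton] at h1 h2 ⊢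
    have := key s
    omega

lemma adjacent_symm {σ ρ : List T} (h : N.Adjacent σ ρ) : N.Adjacent ρ σ := by
  obtain ⟨h1, h2, σ₁, t, u, σ₂, M, hσ, hρ, hM, hen⟩ := h
  exact ⟨h2, h1, σ₁, u, t, σ₂, M, hρ, hσ, hM, N.enabled_pair_symm hen⟩

lemma adjEquiv_symm {a b : List T} (h : N.AdjEquiv a b) : N.AdjEquiv b a :=
  (@Relation.ReflTransGen.stdSymm _ _ ⟨fun _ _ h' => N.adjacent_symm h'⟩).symm _ _ h

lemma adjEquiv_fs {a b : List T} (h : N.AdjEquiv a b) (hb : N.FS b) : N.FS a := by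
  induction h with
  | refl => exact hb
  | tail _ hbc ih => exact ih hbc.1

lemma adjacent_append {σ ρ rest : List T} (h : N.Adjacent σ ρ)
    (hFS : N.FS (σ ++ rest)) : N.Adjacent (σ ++ rest) (ρ ++ rest) := by
  obtain ⟨-, -, σ₁, t, u, σ₂, M, hσ, hρ, hM, hen⟩ := h
  subst hσ hρ
  obtain ⟨Mf, hMf⟩ := hFS
  have hassoc : (σ₁ ++ t :: u :: σ₂) ++ rest = σ₁ ++ (t :: u :: (σ₂ ++ rest)) := by
    simp
  have hassoc' : (σ₁ ++ u :: t :: σ₂) ++ rest = σ₁ ++ (u :: t :: (σ₂ ++ rest)) := by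
    simp
  rw [hassoc] at hMf
  obtain ⟨M', hM', hrest⟩ := N.fireSeq_append.1 hMf
  have hMM : M' = M := N.fireSeq_det σ₁ hM' hM
  subst hMM
  have hswap := N.swap_front hen hrest
  refine ⟨⟨Mf, ?_⟩, ⟨Mf, ?_⟩, σ₁, t, u, σ₂ ++ rest, M', hassoc, hassoc', hM', hen⟩
  · rw [hassoc]; exact N.fireSeq_append.2 ⟨M', hM', hrest⟩
  · rw [hassoc']; exact N.fireSeq_append.2 ⟨M', hM', hswap⟩

lemma adjEquiv_append {a b rest : List T} (h : N.AdjEquiv a b)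
    (hFS : N.FS (a ++ rest)) :
    N.AdjEquiv (a ++ rest) (b ++ rest) ∧ N.FS (b ++ rest) := by
  induction h with
  | refl => exact ⟨Relation.ReflTransGen.refl, hFS⟩
  | tail _ hbc ih =>
      obtain ⟨h1, h2⟩ := ih
      have hadj := N.adjacent_append hbc h2
      exact ⟨h1.tail hadj, hadj.2.1⟩

lemma adjacent_filter (p : T → Bool)
    (hp : ∀ a b (M : S → ℕ), N.Reachable M → N.Enabled M (a ::ₘ {b}) →
      p a = true → p b = true → a = b)
    {σ ρ : List T} (h : N.Adjacent σ ρ) : σ.filter p = ρ.filter p := by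
  obtain ⟨-, -, σ₁, t, u, σ₂, M, hσ, hρ, hM, hen⟩ := h
  subst hσ hρ
  have key : (t :: u :: σ₂).filter p = (u :: t :: σ₂).filter p := by
    by_cases hpt : p t = true <;> by_cases hpu : p u = true
    · obtain rfl := hp t u M ⟨σ₁, hM⟩ hen hpt hpu; rfl
    · simp [List.filter_cons, hpt, hpu]
    · simp [List.filter_cons, hpt, hpu]
    · simp [List.filter_cons, hpt, hpu]
  simp only [List.filter_append, key]

lemma adjEquiv_filter (p : T → Bool)
    (hp : ∀ a b (M : S → ℕ), N.Reachable M → N.Enabled M (a ::ₘ {b}) →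
      p a = true → p b = true → a = b)
    {σ ρ : List T} (h : N.AdjEquiv σ ρ) : σ.filter p = ρ.filter p := by
  induction h with
  | refl => rfl
  | tail _ hbc ih => exact ih.trans (N.adjacent_filter p hp hbc)

lemma coenabled_of_adjEquiv {t u : T} (htu : t ≠ u) {σ l k : List T}
    (h : N.AdjEquiv (σ ++ t :: l) (σ ++ u :: k)) :
    ∃ M, N.Reachable M ∧ N.Enabled M (t ::ₘ {u}) := by
  by_contra hno
  push_neg at hno
  classical
  set p : T → Bool := fun x => decide (x = t ∨ x = u) with hpdef
  have hpt : p t = true := by simp [hpdef]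
  have hpu : p u = true := by simp [hpdef]
  have hp : ∀ a b (M : S → ℕ), N.Reachable M → N.Enabled M (a ::ₘ {b}) →
      p a = true → p b = true → a = b := by
    intro a b M hM hen hpa hpb
    simp only [hpdef, decide_eq_true_eq] at hpa hpb
    rcases hpa with rfl | rfl <;> rcases hpb with rfl | rfl
    · rfl
    · exact absurd hen (hno M hM)
    · exact absurd (N.enabled_pair_symm hen) (hno M hM)
    · rfl
  have hf := N.adjEquiv_filter p hp h
  simp only [List.filter_append, List.filter_cons, hpt, hpu, if_pos] at hf
  have := List.append_cancel_left hf
  exact htu (List.head_eq_of_cons_eq this)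

lemma sum_le_of_sep {G : Multiset T} (f : T → ℕ) (m : ℕ)
    (hsep : ∀ t ∈ G, ∀ u ∈ G, t ≠ u → f t = 0 ∨ f u = 0)
    (hb : ∀ t ∈ G, G.count t * f t ≤ m) :
    (G.map f).sum ≤ m := by
  classical
  by_cases h : ∃ t₀ ∈ G, f t₀ ≠ 0
  · obtain ⟨t₀, ht₀, hf⟩ := h
    rw [Finset.sum_multiset_map_count, Finset.sum_eq_single t₀]
    · simpa [smul_eq_mul] using hb t₀ ht₀
    · intro b hb' hne
      rcases hsep b (Multiset.mem_toFinset.1 hb') t₀ ht₀ hne with h0 | h0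
      · simp [h0]
      · exact absurd h0 hf
    · intro h'
      exact absurd (Multiset.mem_toFinset.2 ht₀) h'
  · push_neg at h
    have hz : (G.map f).sum = 0 := by
      apply Multiset.sum_eq_zero
      intro x hx
      obtain ⟨a, ha, rfl⟩ := Multiset.mem_map.1 hx
      exact h a ha
    rw [hz]
    exact Nat.zero_le m

end Net

lemma fseq_equivalence {S T : Type*} (N : Net S T) :
    Equivalence (fun σ ρ : FSeq N => N.AdjEquiv σ.1 ρ.1) :=
  ⟨fun _ => Relation.ReflTransGen.refl, fun h => N.adjEquiv_symm h,
    fun h1 h2 => h1.trans h2⟩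

lemma fsClass_eq_iff {S T : Type*} {N : Net S T} {σ ρ : FSeq N} :
    fsClass N σ = fsClass N ρ ↔ N.AdjEquiv σ.1 ρ.1 := by
  constructor
  · intro h
    exact ((fseq_equivalence N).eqvGen_iff).1 (Quot.eq.1 h)
  · exact fun h => Quot.sound h

end Aux


/-- Theorem 5 of the paper: every FS-run of a structural
conflict net is conflict-free. -/
theorem fsRun_conflictFree_of_structuralConflictNet {S T : Type*}
    (N : Net S T) (hN : N.StructuralConflictNet)
    (R : Set (PartialFSRun N)) (hR : IsFSRun N R) :
    ConflictFreeFSRun N R := by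
  intro G σ hG hyp
  obtain ⟨t₀, ht₀⟩ := Multiset.exists_mem_of_ne_zero hG
  obtain ⟨-, M, hM, -⟩ := hyp t₀ ht₀
  refine ⟨M, hM, hG, fun s => ?_⟩
  have hbound : ∀ t ∈ G, G.count t * N.pre t s ≤ M s := by
    intro t ht
    obtain ⟨-, M', hM', hen⟩ := hyp t ht
    obtain rfl : M' = M := N.fireSeq_det σ hM' hM
    have := hen.2 s
    rwa [N.preM_replicate] at this
  have hsep : ∀ t ∈ G, ∀ u ∈ G, t ≠ u → N.pre t s = 0 ∨ N.pre u s = 0 := by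
    intro t ht u hu htu
    obtain ⟨⟨hFSt, hRt⟩, -⟩ := hyp t ht
    obtain ⟨⟨hFSu, hRu⟩, -⟩ := hyp u hu
    obtain ⟨z, -, hle1, hle2⟩ := hR.2 _ hRt _ hRu
    obtain ⟨σ₀, ρ₀, he1, he2, μt, hpre, hadjt⟩ := hle1
    obtain ⟨σ₀', ρ₀', he1', he2', μu, hpre', hadju⟩ := hle2
    have ha : N.AdjEquiv σ₀.1 (σ ++ List.replicate (G.count t) t) :=
      fsClass_eq_iff.1 he1
    have ha' : N.AdjEquiv σ₀'.1 (σ ++ List.replicate (G.count u) u) :=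
      fsClass_eq_iff.1 he1'
    have hρρ : N.AdjEquiv ρ₀.1 ρ₀'.1 :=
      fsClass_eq_iff.1 (he2.trans he2'.symm)
    obtain ⟨rt, rfl⟩ := hpre
    obtain ⟨ru, rfl⟩ := hpre'
    have hFS1 : N.FS (σ₀.1 ++ rt) := N.adjEquiv_fs hadjt ρ₀.2
    have hFS2 : N.FS (σ₀'.1 ++ ru) := N.adjEquiv_fs hadju ρ₀'.2
    have happt := N.adjEquiv_append ha hFS1
    have happu := N.adjEquiv_append ha' hFS2
    have chain : N.AdjEquiv ((σ ++ List.replicate (G.count t) t) ++ rt)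
        ((σ ++ List.replicate (G.count u) u) ++ ru) :=
      (((N.adjEquiv_symm happt.1).trans hadjt).trans hρρ).trans
        ((N.adjEquiv_symm hadju).trans happu.1)
    have hkt : G.count t = (G.count t - 1) + 1 :=
      (Nat.succ_pred_eq_of_pos (Multiset.count_pos.2 ht)).symm
    have hku : G.count u = (G.count u - 1) + 1 :=
      (Nat.succ_pred_eq_of_pos (Multiset.count_pos.2 hu)).symm
    rw [hkt, hku, List.replicate_succ, List.replicate_succ] at chain
    simp only [List.append_assoc, List.cons_append] at chain
    obtain ⟨M', hreach, hen⟩ := N.coenabled_of_adjEquiv htu chain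
    exact hN t u ⟨M', hreach, hen⟩ s
  exact Net.sum_le_of_sep (fun t => N.pre t s) (M s) hsep hbound
end
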